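/- arXiv:2411.13510 — 7 statements merged into one kernel-verified Lean document; each statement's English description precedes it below -/
import Mathlib

section
/- Let δ ∈ (0, 1/2] and let 𝒜, ℬ ⊆ 2^[n] be nonempty set families such that at least (1/2 + δ)·|𝒜|·|ℬ| ordered pairs (A, B) ∈ 𝒜 × ℬ satisfy that |A ∩ B| is even. Then |𝒜|·|ℬ| ≤ 2^n / (4δ²). The same conclusion holds if 'even' is replaced by 'odd'. -/
open Finset

private lemma sign_prod {n : ℕ} (A C : Finset (Fin n)) :
    (-1 : ℝ) ^ (A ∩ C).card = ∏ i ∈ A, (if i ∈ C then (-1 : ℝ) else 1) := by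
  rw [Finset.prod_ite_mem, Finset.prod_const]

private lemma sum_sign {n : ℕ} (C : Finset (Fin n)) :
    ∑ A : Finset (Fin n), (-1 : ℝ) ^ (A ∩ C).card
      = if C = ∅ then (2 : ℝ) ^ n else 0 := by
  have h1 : ∀ A : Finset (Fin n), (-1 : ℝ) ^ (A ∩ C).card
      = (∏ i ∈ A, (if i ∈ C then (-1 : ℝ) else 1)) * ∏ i ∈ (univ \ A), (1 : ℝ) := by
    intro A; rw [sign_prod, Finset.prod_const_one, mul_one]
  simp_rw [h1]
  rw [← Finset.powerset_univ, ← Finset.prod_add]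
  by_cases hC : C = ∅
  · simp [hC]; norm_num
  · obtain ⟨i, hi⟩ := Finset.nonempty_iff_ne_empty.2 hC
    rw [if_neg hC]
    exact Finset.prod_eq_zero (Finset.mem_univ i) (by simp [hi])

private lemma key_sum {n : ℕ} (B B' : Finset (Fin n)) :
    ∑ A : Finset (Fin n), (-1 : ℝ) ^ (A ∩ B).card * (-1 : ℝ) ^ (A ∩ B').card
      = if B = B' then (2 : ℝ) ^ n else 0 := by
  have h1 : ∀ A : Finset (Fin n), (-1 : ℝ) ^ (A ∩ B).card * (-1 : ℝ) ^ (A ∩ B').card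
      = (-1 : ℝ) ^ (A ∩ (symmDiff B B')).card := by
    intro A
    rw [sign_prod, sign_prod, sign_prod, ← Finset.prod_mul_distrib]
    refine Finset.prod_congr rfl fun i _ => ?_
    by_cases hb : i ∈ B <;> by_cases hb' : i ∈ B' <;>
      simp [Finset.mem_symmDiff, hb, hb']
  simp_rw [h1, sum_sign]
  have h2 : (symmDiff B B' = ∅) ↔ (B = B') := by
    rw [← Finset.bot_eq_empty, symmDiff_eq_bot]
  simp only [h2]

/-- **Families with many even (or odd) intersections.** Let `δ ∈ (0, 1/2]` and let
`𝒜, ℬ ⊆ 2^[n]` be nonempty families such that at least `(1/2+δ)·|𝒜|·|ℬ|` ordered pairs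
`(A,B) ∈ 𝒜 × ℬ` have `|A ∩ B|` even (or, alternatively, odd). Then
`|𝒜|·|ℬ| ≤ 2^n / (4δ²)`. -/
theorem even_odd_intersections (n : ℕ) (δ : ℝ) (hδ : δ ∈ Set.Ioc (0 : ℝ) (1/2))
    (𝒜 ℬ : Finset (Finset (Fin n))) (h𝒜 : 𝒜.Nonempty) (hℬ : ℬ.Nonempty)
    (h : (1/2 + δ) * ((𝒜.card : ℝ) * (ℬ.card : ℝ)) ≤
          (((𝒜 ×ˢ ℬ).filter fun p => Even (p.1 ∩ p.2).card).card : ℝ) ∨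
        (1/2 + δ) * ((𝒜.card : ℝ) * (ℬ.card : ℝ)) ≤
          (((𝒜 ×ˢ ℬ).filter fun p => Odd (p.1 ∩ p.2).card).card : ℝ)) :
    (𝒜.card : ℝ) * (ℬ.card : ℝ) ≤ 2 ^ n / (4 * δ ^ 2) := by
  obtain ⟨hδ0, hδ2⟩ := hδ
  set N : ℝ := (𝒜.card : ℝ) * (ℬ.card : ℝ) with hN
  have hNpos : 0 < N := by
    apply mul_pos <;> exact_mod_cast Finset.card_pos.2 (by assumption)
  set g : Finset (Fin n) → ℝ := fun A => ∑ B ∈ ℬ, (-1 : ℝ) ^ (A ∩ B).card with hg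
  set S : ℝ := ∑ A ∈ 𝒜, g A with hS
  -- Cauchy–Schwarz and Parseval
  have hCS : S ^ 2 ≤ (𝒜.card : ℝ) * ∑ A ∈ 𝒜, (g A) ^ 2 := by
    simpa using sq_sum_le_card_mul_sum_sq (s := 𝒜) (f := g)
  have hsub : ∑ A ∈ 𝒜, (g A) ^ 2 ≤ ∑ A : Finset (Fin n), (g A) ^ 2 :=
    Finset.sum_le_sum_of_subset_of_nonneg (Finset.subset_univ 𝒜)
      (fun A _ _ => sq_nonneg _)
  have hpar : ∑ A : Finset (Fin n), (g A) ^ 2 = (ℬ.card : ℝ) * 2 ^ n := by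
    have h3 : ∀ A : Finset (Fin n), (g A) ^ 2
        = ∑ B ∈ ℬ, ∑ B' ∈ ℬ, (-1 : ℝ) ^ (A ∩ B).card * (-1 : ℝ) ^ (A ∩ B').card := by
      intro A; rw [sq, hg, Finset.sum_mul_sum]
    simp_rw [h3]
    rw [Finset.sum_comm]
    have h4 : ∀ B ∈ ℬ, ∑ A : Finset (Fin n),
        ∑ B' ∈ ℬ, (-1 : ℝ) ^ (A ∩ B).card * (-1 : ℝ) ^ (A ∩ B').card = 2 ^ n := by
      intro B hB
      rw [Finset.sum_comm]
      rw [Finset.sum_eq_single B]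
      · rw [key_sum B B, if_pos rfl]
      · intro B' _ hne
        rw [key_sum B B', if_neg fun e => hne e.symm]
      · intro hB'; exact absurd hB hB'
    rw [Finset.sum_congr rfl h4, Finset.sum_const, nsmul_eq_mul]
  have hup : S ^ 2 ≤ N * 2 ^ n := by
    calc S ^ 2 ≤ (𝒜.card : ℝ) * ∑ A ∈ 𝒜, (g A) ^ 2 := hCS
    _ ≤ (𝒜.card : ℝ) * ((ℬ.card : ℝ) * 2 ^ n) := by
        apply mul_le_mul_of_nonneg_left (le_trans hsub (le_of_eq hpar))
          (Nat.cast_nonneg _)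
    _ = N * 2 ^ n := by ring
  -- S = E - O
  set E : ℝ := (((𝒜 ×ˢ ℬ).filter fun p => Even (p.1 ∩ p.2).card).card : ℝ) with hE
  set O : ℝ := (((𝒜 ×ˢ ℬ).filter fun p => Odd (p.1 ∩ p.2).card).card : ℝ) with hO
  have hodd : ((𝒜 ×ˢ ℬ).filter fun p => Odd (p.1 ∩ p.2).card)
      = ((𝒜 ×ˢ ℬ).filter fun p => ¬ Even (p.1 ∩ p.2).card) := by
    apply Finset.filter_congr
    intro p _
    simp [Nat.not_even_iff_odd]
  have hEO : E + O = N := by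
    rw [hE, hO, hN, ← Nat.cast_mul, ← Finset.card_product 𝒜 ℬ, ← Nat.cast_add]
    congr 1
    rw [hodd]
    exact Finset.card_filter_add_card_filter_not _
  have hSEO : S = E - O := by
    rw [hS, hg, ← Finset.sum_product',
      ← Finset.sum_filter_add_sum_filter_not (𝒜 ×ˢ ℬ)
        (fun p => Even (p.1 ∩ p.2).card)]
    have h1 : ∑ p ∈ (𝒜 ×ˢ ℬ).filter (fun p => Even (p.1 ∩ p.2).card),
        (-1 : ℝ) ^ (p.1 ∩ p.2).card = E := by
      rw [hE, Finset.sum_congr rfl (fun p hp => by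
        rw [(Finset.mem_filter.1 hp).2.neg_one_pow])]
      simp
    have h2 : ∑ p ∈ (𝒜 ×ˢ ℬ).filter (fun p => ¬ Even (p.1 ∩ p.2).card),
        (-1 : ℝ) ^ (p.1 ∩ p.2).card = -O := by
      rw [Finset.sum_congr rfl (fun p hp => by
        rw [(Nat.not_even_iff_odd.1 (Finset.mem_filter.1 hp).2).neg_one_pow]),
        hO, hodd]
      simp
    rw [h1, h2]; ring
  -- lower bound on |S|
  have hlow : 2 * δ * N ≤ |S| := by
    rcases h with hc | hc
    · have hO' : O ≤ (1/2 - δ) * N := by nlinarith [hEO, hc]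
      have : 2 * δ * N ≤ S := by rw [hSEO]; nlinarith [hc, hO']
      exact le_trans this (le_abs_self S)
    · have hE' : E ≤ (1/2 - δ) * N := by nlinarith [hEO, hc]
      have : 2 * δ * N ≤ -S := by rw [hSEO]; nlinarith [hc, hE']
      exact le_trans this (neg_le_abs S)
  have hsq : (2 * δ * N) ^ 2 ≤ N * 2 ^ n := by
    calc (2 * δ * N) ^ 2 ≤ |S| ^ 2 := by
          apply pow_le_pow_left₀ (by positivity) hlow
    _ = S ^ 2 := sq_abs S
    _ ≤ N * 2 ^ n := hup
  rw [le_div_iff₀ (by positivity)]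
  nlinarith [hsq, hNpos]
end

section
/- Let n ≥ r ≥ 1 be positive integers and let μ be a probability distribution on 2^[n], i.e. a function μ : 2^[n] → [0, 1] with Σ_{A ⊆ [n]} μ(A) = 1. If A₀, A₁, …, A_r are drawn independently from μ, then the probability that A₀ ⊆ A₁ ∪ ⋯ ∪ A_r is at least 2^(−n/r − 2). Equivalently, Σ over all (r+1)-tuples (A₀, A₁, …, A_r) of subsets of [n] with A₀ ⊆ A₁ ∪ ⋯ ∪ A_r of the product μ(A₀)·μ(A₁)⋯μ(A_r) is at least 2^(−n/r − 2). -/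
open Finset

/-- Gibbs' inequality: weighted log-sum bound. -/
lemma gibbs_ineq {ι : Type*} (s : Finset ι) (w y : ι → ℝ)
    (h0 : ∀ i ∈ s, 0 ≤ w i) (h1 : ∀ i ∈ s, 0 ≤ y i)
    (h2 : ∀ i ∈ s, w i ≠ 0 → y i ≠ 0)
    (hw : ∑ i ∈ s, w i = 1) :
    ∑ i ∈ s, w i * Real.log (y i / w i) ≤ Real.log (∑ i ∈ s, y i) := by
  classical
  set t := s.filter (fun i => w i ≠ 0) with ht
  have hsub : t ⊆ s := filter_subset _ _
  have hwt : ∑ i ∈ t, w i = 1 := by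
    rw [ht, Finset.sum_filter_of_ne (fun i hi h => h), hw]
  have hwpos : ∀ i ∈ t, 0 < w i := by
    intro i hi
    rcases mem_filter.1 hi with ⟨his, hne⟩
    exact lt_of_le_of_ne (h0 i his) (Ne.symm hne)
  have hypos : ∀ i ∈ t, 0 < y i := by
    intro i hi
    rcases mem_filter.1 hi with ⟨his, hne⟩
    exact lt_of_le_of_ne (h1 i his) (Ne.symm (h2 i his hne))
  have htne : t.Nonempty := by
    by_contra h
    rw [not_nonempty_iff_eq_empty] at h
    rw [h, sum_empty] at hwt; norm_num at hwt
  set Y := ∑ i ∈ t, y i with hY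
  have hYpos : 0 < Y := sum_pos hypos htne
  have hLHS : ∑ i ∈ s, w i * Real.log (y i / w i)
      = ∑ i ∈ t, w i * Real.log (y i / w i) := by
    rw [ht, Finset.sum_filter_of_ne]
    intro i _ h hw0
    exact h (by rw [hw0, zero_mul])
  have key : ∑ i ∈ t, w i * (Real.log (y i / w i) - Real.log Y) ≤ 0 := by
    have step1 : ∀ i ∈ t, w i * (Real.log (y i / w i) - Real.log Y)
        ≤ y i / Y - w i := by
      intro i hi
      have hwi := hwpos i hi
      have hyi := hypos i hi
      have harg : 0 < y i / (w i * Y) := div_pos hyi (mul_pos hwi hYpos)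
      have : Real.log (y i / w i) - Real.log Y = Real.log (y i / (w i * Y)) := by
        rw [Real.log_div (ne_of_gt hyi) (ne_of_gt hwi), Real.log_div (ne_of_gt hyi)
          (ne_of_gt (mul_pos hwi hYpos)), Real.log_mul (ne_of_gt hwi) (ne_of_gt hYpos)]
        ring
      rw [this]
      calc w i * Real.log (y i / (w i * Y)) ≤ w i * (y i / (w i * Y) - 1) := by
            exact mul_le_mul_of_nonneg_left (Real.log_le_sub_one_of_pos harg) (le_of_lt hwi)
        _ = y i / Y - w i := by field_simp
    calc ∑ i ∈ t, w i * (Real.log (y i / w i) - Real.log Y)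
        ≤ ∑ i ∈ t, (y i / Y - w i) := sum_le_sum step1
      _ = (∑ i ∈ t, y i) / Y - ∑ i ∈ t, w i := by rw [sum_sub_distrib, sum_div]
      _ = 0 := by rw [← hY, hwt, div_self (ne_of_gt hYpos)]; ring
  have hYle : Real.log Y ≤ Real.log (∑ i ∈ s, y i) := by
    apply Real.log_le_log hYpos
    exact sum_le_sum_of_subset_of_nonneg hsub (fun i hi _ => h1 i hi)
  calc ∑ i ∈ s, w i * Real.log (y i / w i)
      = ∑ i ∈ t, w i * (Real.log (y i / w i) - Real.log Y) + (∑ i ∈ t, w i) * Real.log Y := by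
        rw [hLHS, Finset.sum_mul]
        rw [← Finset.sum_add_distrib]
        apply sum_congr rfl; intro i _; ring
    _ ≤ 0 + 1 * Real.log Y := by
        apply add_le_add key; rw [hwt]
    _ ≤ Real.log (∑ i ∈ s, y i) := by rw [zero_add, one_mul]; exact hYle

namespace CovAux

variable {n r : ℕ}

/-- union of the tuple -/
def UU (g : Fin r → Finset (Fin n)) : Finset (Fin n) := Finset.univ.biUnion g

/-- product weight -/
def PP (μ : Finset (Fin n) → ℝ) (g : Fin r → Finset (Fin n)) : ℝ := ∏ i, μ (g i)

/-- law of the union -/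
def pu (r : ℕ) (μ : Finset (Fin n) → ℝ) (u : Finset (Fin n)) : ℝ :=
  ∑ g ∈ univ.filter (fun g : Fin r → Finset (Fin n) => UU g = u), PP μ g

/-- joint law of (g i, union) -/
def JJ (μ : Finset (Fin n) → ℝ) (i : Fin r) (a u : Finset (Fin n)) : ℝ :=
  ∑ g ∈ univ.filter (fun g : Fin r → Finset (Fin n) => UU g = u ∧ g i = a), PP μ g

/-- cdf -/
def FF (μ : Finset (Fin n) → ℝ) (u : Finset (Fin n)) : ℝ :=
  ∑ A ∈ univ.filter (fun A : Finset (Fin n) => A ⊆ u), μ A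

variable {μ : Finset (Fin n) → ℝ}

lemma PP_nonneg (hμ0 : ∀ A, 0 ≤ μ A) (g : Fin r → Finset (Fin n)) : 0 ≤ PP μ g :=
  Finset.prod_nonneg fun i _ => hμ0 (g i)

lemma pu_nonneg (hμ0 : ∀ A, 0 ≤ μ A) (u : Finset (Fin n)) : 0 ≤ pu r μ u :=
  Finset.sum_nonneg fun g _ => PP_nonneg hμ0 g

lemma JJ_nonneg (hμ0 : ∀ A, 0 ≤ μ A) (i : Fin r) (a u : Finset (Fin n)) : 0 ≤ JJ μ i a u :=
  Finset.sum_nonneg fun g _ => PP_nonneg hμ0 g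

lemma FF_nonneg (hμ0 : ∀ A, 0 ≤ μ A) (u : Finset (Fin n)) : 0 ≤ FF μ u :=
  Finset.sum_nonneg fun A _ => hμ0 A

lemma subset_UU (g : Fin r → Finset (Fin n)) (i : Fin r) : g i ⊆ UU g :=
  Finset.subset_biUnion_of_mem g (mem_univ i)

lemma PP_sum (hsum : ∑ A : Finset (Fin n), μ A = 1) :
    ∑ g : Fin r → Finset (Fin n), PP μ g = 1 := by
  unfold PP
  rw [← Fintype.prod_sum (fun (_ : Fin r) (A : Finset (Fin n)) => μ A)]
  simp [hsum]

lemma pu_sum (hsum : ∑ A : Finset (Fin n), μ A = 1) :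
    ∑ u : Finset (Fin n), pu r μ u = 1 := by
  unfold pu
  rw [Finset.sum_fiberwise_of_maps_to (fun g _ => mem_univ (UU g)) (PP μ)]
  exact PP_sum hsum

/-- fiberwise grouping over the union -/
lemma sum_fiber_mul (f : (Fin r → Finset (Fin n)) → ℝ) (φ : Finset (Fin n) → ℝ) :
    ∑ g : Fin r → Finset (Fin n), f g * φ (UU g)
      = ∑ u : Finset (Fin n), (∑ g ∈ univ.filter (fun g => UU g = u), f g) * φ u := by
  rw [← Finset.sum_fiberwise_of_maps_to (fun (g : Fin r → Finset (Fin n)) _ => mem_univ (UU g))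
    (fun g => f g * φ (UU g))]
  apply sum_congr rfl; intro u _
  rw [Finset.sum_mul]
  apply sum_congr rfl; intro g hg
  rw [(mem_filter.1 hg).2]

/-- fiberwise grouping over (g i, union) -/
lemma sum_fiber2 (i : Fin r) (f : (Fin r → Finset (Fin n)) → ℝ)
    (φ : Finset (Fin n) → Finset (Fin n) → ℝ) :
    ∑ g : Fin r → Finset (Fin n), f g * φ (g i) (UU g)
      = ∑ u : Finset (Fin n), ∑ a : Finset (Fin n),
          (∑ g ∈ univ.filter (fun g => UU g = u ∧ g i = a), f g) * φ a u := by
  rw [← Finset.sum_fiberwise_of_maps_to (fun (g : Fin r → Finset (Fin n)) _ => mem_univ (UU g))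
    (fun g => f g * φ (g i) (UU g))]
  apply sum_congr rfl; intro u _
  rw [← Finset.sum_fiberwise_of_maps_to
    (fun (g : Fin r → Finset (Fin n)) (_ : g ∈ univ.filter (fun g => UU g = u)) => mem_univ (g i))
    (fun g => f g * φ (g i) (UU g))]
  apply sum_congr rfl; intro a _
  rw [Finset.filter_filter, Finset.sum_mul]
  apply sum_congr rfl; intro g hg
  rcases mem_filter.1 hg with ⟨_, h1, h2⟩
  rw [h1, h2]

lemma JJ_sum (i : Fin r) (u : Finset (Fin n)) :
    ∑ a : Finset (Fin n), JJ μ i a u = pu r μ u := by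
  unfold JJ pu
  rw [← Finset.sum_fiberwise_of_maps_to
    (fun (g : Fin r → Finset (Fin n)) (_ : g ∈ univ.filter (fun g => UU g = u)) => mem_univ (g i))
    (PP μ)]
  apply sum_congr rfl; intro a _
  rw [Finset.filter_filter]

lemma JJ_eq_zero (i : Fin r) {a u : Finset (Fin n)} (h : ¬ a ⊆ u) : JJ μ i a u = 0 := by
  unfold JJ
  rw [Finset.filter_false_of_mem, Finset.sum_empty]
  rintro g _ ⟨h1, h2⟩
  exact h (h2 ▸ h1 ▸ subset_UU g i)

lemma JJ_sum_filter (i : Fin r) (u : Finset (Fin n)) :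
    ∑ a ∈ univ.filter (fun a : Finset (Fin n) => a ⊆ u), JJ μ i a u = pu r μ u := by
  rw [← JJ_sum i u]
  symm
  rw [eq_comm, Finset.sum_filter_of_ne]
  intro a _ h
  by_contra hc
  exact h (JJ_eq_zero i hc)


lemma PP_factor_ne (hP : PP μ g ≠ 0) (i : Fin r) : μ (g i) ≠ 0 := by
  intro h
  exact hP (Finset.prod_eq_zero (mem_univ i) h)

lemma PP_le_JJ (hμ0 : ∀ A, 0 ≤ μ A) (g : Fin r → Finset (Fin n)) (i : Fin r) :
    PP μ g ≤ JJ μ i (g i) (UU g) := by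
  apply Finset.single_le_sum (fun h _ => PP_nonneg hμ0 h)
  simp

lemma PP_le_pu (hμ0 : ∀ A, 0 ≤ μ A) (g : Fin r → Finset (Fin n)) :
    PP μ g ≤ pu r μ (UU g) := by
  apply Finset.single_le_sum (fun h _ => PP_nonneg hμ0 h)
  simp

lemma mu_le_FF (hμ0 : ∀ A, 0 ≤ μ A) {a u : Finset (Fin n)} (h : a ⊆ u) : μ a ≤ FF μ u := by
  apply Finset.single_le_sum (fun A _ => hμ0 A)
  simp [h]

lemma pu_exists (hμ0 : ∀ A, 0 ≤ μ A) {u : Finset (Fin n)} (h : pu r μ u ≠ 0) :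
    ∃ g : Fin r → Finset (Fin n), PP μ g ≠ 0 ∧ UU g = u := by
  rcases Finset.exists_ne_zero_of_sum_ne_zero h with ⟨g, hg, hne⟩
  exact ⟨g, hne, (mem_filter.1 hg).2⟩

lemma FF_pos (hr : 1 ≤ r) (hμ0 : ∀ A, 0 ≤ μ A) {u : Finset (Fin n)}
    (h : pu r μ u ≠ 0) : 0 < FF μ u := by
  rcases pu_exists hμ0 h with ⟨g, hP, hU⟩
  have i0 : Fin r := ⟨0, hr⟩
  have h1 : μ (g i0) ≠ 0 := PP_factor_ne hP i0
  have h2 : g i0 ⊆ u := hU ▸ subset_UU g i0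
  calc (0:ℝ) < μ (g i0) := lt_of_le_of_ne (hμ0 _) (Ne.symm h1)
    _ ≤ FF μ u := mu_le_FF hμ0 h2

lemma JJ_exists (hμ0 : ∀ A, 0 ≤ μ A) {i : Fin r} {a u : Finset (Fin n)}
    (h : JJ μ i a u ≠ 0) : μ a ≠ 0 ∧ a ⊆ u := by
  rcases Finset.exists_ne_zero_of_sum_ne_zero h with ⟨g, hg, hne⟩
  rcases mem_filter.1 hg with ⟨_, hU, hi⟩
  exact ⟨hi ▸ PP_factor_ne hne i, by rw [← hi, ← hU]; exact subset_UU g i⟩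

/-- App2 : per-u Gibbs inequality -/
lemma app2 (hr : 1 ≤ r) (hμ0 : ∀ A, 0 ≤ μ A) (i : Fin r) (u : Finset (Fin n)) :
    ∑ a : Finset (Fin n), JJ μ i a u * Real.log (pu r μ u * μ a / JJ μ i a u)
      ≤ pu r μ u * Real.log (FF μ u) := by
  rcases eq_or_ne (pu r μ u) 0 with hpu | hpu
  · have hJ : ∀ a : Finset (Fin n), JJ μ i a u = 0 := by
      intro a
      have h1 := JJ_sum (μ := μ) i u
      have h2 : ∀ a ∈ (univ : Finset (Finset (Fin n))), 0 ≤ JJ μ i a u :=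
        fun a _ => JJ_nonneg hμ0 i a u
      have := (Finset.sum_eq_zero_iff_of_nonneg h2).1 (by rw [h1, hpu])
      exact this a (mem_univ a)
    rw [hpu]
    simp [hJ]
  · have hpupos : 0 < pu r μ u := lt_of_le_of_ne (pu_nonneg hμ0 u) (Ne.symm hpu)
    have hg := gibbs_ineq (univ : Finset (Finset (Fin n)))
      (fun a => JJ μ i a u / pu r μ u)
      (fun a => if a ⊆ u then μ a else 0)
      (fun a _ => div_nonneg (JJ_nonneg hμ0 i a u) (le_of_lt hpupos))
      (fun a _ => by split <;> simp [hμ0])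
      (fun a _ hne => by
        have hJne : JJ μ i a u ≠ 0 := by
          intro h0; exact hne (by rw [h0, zero_div])
        rcases JJ_exists hμ0 hJne with ⟨hμa, hau⟩
        rw [if_pos hau]; exact hμa)
      (by rw [← Finset.sum_div, JJ_sum i u, div_self hpu])
    have hFsum : ∑ a : Finset (Fin n), (if a ⊆ u then μ a else 0) = FF μ u := by
      rw [Finset.sum_ite, Finset.sum_const_zero, add_zero]
      rfl
    rw [hFsum] at hg
    calc ∑ a : Finset (Fin n), JJ μ i a u * Real.log (pu r μ u * μ a / JJ μ i a u)
        = pu r μ u * ∑ a : Finset (Fin n),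
            (JJ μ i a u / pu r μ u) *
              Real.log ((if a ⊆ u then μ a else 0) / (JJ μ i a u / pu r μ u)) := by
          rw [Finset.mul_sum]
          apply sum_congr rfl; intro a _
          rcases eq_or_ne (JJ μ i a u) 0 with hJ | hJ
          · rw [hJ]; simp
          · rcases JJ_exists hμ0 hJ with ⟨hμa, hau⟩
            rw [if_pos hau, div_div_eq_mul_div, mul_comm (μ a) (pu r μ u)]
            field_simp
      _ ≤ pu r μ u * Real.log (FF μ u) :=
          mul_le_mul_of_nonneg_left hg (le_of_lt hpupos)

/-- the witness for the mutual-information bound -/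
noncomputable def QQ (μ : Finset (Fin n) → ℝ) (r : ℕ) (g : Fin r → Finset (Fin n)) : ℝ :=
  (∏ i, JJ μ i (g i) (UU g)) / (pu r μ (UU g)) ^ (r - 1)

lemma QQ_nonneg (hμ0 : ∀ A, 0 ≤ μ A) (g : Fin r → Finset (Fin n)) : 0 ≤ QQ μ r g :=
  div_nonneg (Finset.prod_nonneg fun i _ => JJ_nonneg hμ0 i _ _)
    (pow_nonneg (pu_nonneg hμ0 _) _)

set_option maxHeartbeats 1000000 in
lemma QQ_sum_le (hr : 1 ≤ r) (hμ0 : ∀ A, 0 ≤ μ A)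
    (hsum : ∑ A : Finset (Fin n), μ A = 1) :
    ∑ g : Fin r → Finset (Fin n), QQ μ r g ≤ 1 := by
  rw [← Finset.sum_fiberwise_of_maps_to (fun (g : Fin r → Finset (Fin n)) _ => mem_univ (UU g))
    (QQ μ r)]
  rw [← pu_sum (r := r) hsum]
  apply Finset.sum_le_sum
  intro u _
  have hfib : ∀ g ∈ univ.filter (fun g : Fin r → Finset (Fin n) => UU g = u),
      QQ μ r g = (∏ i, JJ μ i (g i) u) / (pu r μ u) ^ (r - 1) := by
    intro g hg
    have := (mem_filter.1 hg).2
    unfold QQ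
    rw [this]
  rw [Finset.sum_congr rfl hfib, ← Finset.sum_div]
  have hbound : ∑ g ∈ univ.filter (fun g : Fin r → Finset (Fin n) => UU g = u),
      (∏ i, JJ μ i (g i) u) ≤ (pu r μ u) ^ r := by
    have hsubset : univ.filter (fun g : Fin r → Finset (Fin n) => UU g = u)
        ⊆ Fintype.piFinset (fun _ : Fin r => univ.filter (fun a : Finset (Fin n) => a ⊆ u)) := by
      intro g hg
      rw [Fintype.mem_piFinset]
      intro i
      rw [mem_filter]
      exact ⟨mem_univ _, (mem_filter.1 hg).2 ▸ subset_UU g i⟩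
    calc ∑ g ∈ univ.filter (fun g : Fin r → Finset (Fin n) => UU g = u), (∏ i, JJ μ i (g i) u)
        ≤ ∑ g ∈ Fintype.piFinset (fun _ : Fin r => univ.filter (fun a : Finset (Fin n) => a ⊆ u)),
            (∏ i, JJ μ i (g i) u) := by
          apply Finset.sum_le_sum_of_subset_of_nonneg hsubset
          intro g _ _
          exact Finset.prod_nonneg fun i _ => JJ_nonneg hμ0 i _ _
      _ = ∏ i : Fin r, ∑ a ∈ univ.filter (fun a : Finset (Fin n) => a ⊆ u), JJ μ i a u :=
          Finset.sum_prod_piFinset (univ.filter (fun a : Finset (Fin n) => a ⊆ u)) (fun i a => JJ μ i a u)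
      _ = ∏ _i : Fin r, pu r μ u := by
          apply Finset.prod_congr rfl; intro i _; exact JJ_sum_filter i u
      _ = (pu r μ u) ^ r := by rw [Finset.prod_const, card_univ, Fintype.card_fin]
  rcases eq_or_ne (pu r μ u) 0 with hpu | hpu
  · have hz : ∑ g ∈ univ.filter (fun g : Fin r → Finset (Fin n) => UU g = u),
        (∏ i, JJ μ i (g i) u) = 0 := by
      apply le_antisymm
      · calc _ ≤ (pu r μ u) ^ r := hbound
          _ = 0 := by rw [hpu, zero_pow (by omega)]
      · exact Finset.sum_nonneg fun g _ => Finset.prod_nonneg fun i _ => JJ_nonneg hμ0 i _ _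
    rw [hz, zero_div, hpu]
  · have hpupos : 0 < pu r μ u := lt_of_le_of_ne (pu_nonneg hμ0 u) (Ne.symm hpu)
    rw [div_le_iff₀ (pow_pos hpupos _)]
    calc _ ≤ (pu r μ u) ^ r := hbound
      _ = pu r μ u * pu r μ u ^ (r - 1) := by
          rw [← pow_succ']
          congr 1
          omega

/-- the per-g log identity -/
lemma log_identity (hr : 1 ≤ r) (hμ0 : ∀ A, 0 ≤ μ A) (g : Fin r → Finset (Fin n)) :
    PP μ g * Real.log (QQ μ r g / PP μ g)
      = (∑ i : Fin r, PP μ g * Real.log (JJ μ i (g i) (UU g) / (pu r μ (UU g) * μ (g i))))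
        + PP μ g * Real.log (pu r μ (UU g)) := by
  rcases eq_or_ne (PP μ g) 0 with hP | hP
  · rw [hP]; simp
  · have hPpos : 0 < PP μ g := lt_of_le_of_ne (PP_nonneg hμ0 g) (Ne.symm hP)
    have hpupos : 0 < pu r μ (UU g) := lt_of_lt_of_le hPpos (PP_le_pu hμ0 g)
    have hJpos : ∀ i : Fin r, 0 < JJ μ i (g i) (UU g) :=
      fun i => lt_of_lt_of_le hPpos (PP_le_JJ hμ0 g i)
    have hμpos : ∀ i : Fin r, 0 < μ (g i) :=
      fun i => lt_of_le_of_ne (hμ0 _) (Ne.symm (PP_factor_ne hP i))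
    have hprodpos : 0 < ∏ i, JJ μ i (g i) (UU g) :=
      Finset.prod_pos fun i _ => hJpos i
    have hQpos : 0 < QQ μ r g := div_pos hprodpos (pow_pos hpupos _)
    have hcast : ((r - 1 : ℕ) : ℝ) = (r : ℝ) - 1 := by
      rw [Nat.cast_sub hr]; norm_num
    have hlog : Real.log (QQ μ r g / PP μ g)
        = (∑ i : Fin r, Real.log (JJ μ i (g i) (UU g) / (pu r μ (UU g) * μ (g i))))
          + Real.log (pu r μ (UU g)) := by
      rw [Real.log_div (ne_of_gt hQpos) hP]
      unfold QQ
      rw [Real.log_div (ne_of_gt hprodpos) (ne_of_gt (pow_pos hpupos _))]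
      rw [Real.log_prod (fun i _ => ne_of_gt (hJpos i))]
      rw [Real.log_pow]
      unfold PP
      rw [Real.log_prod (fun i _ => ne_of_gt (hμpos i))]
      have hterm : ∀ i : Fin r, Real.log (JJ μ i (g i) (UU g) / (pu r μ (UU g) * μ (g i)))
          = Real.log (JJ μ i (g i) (UU g)) - Real.log (pu r μ (UU g)) - Real.log (μ (g i)) := by
        intro i
        rw [Real.log_div (ne_of_gt (hJpos i))
          (ne_of_gt (mul_pos hpupos (hμpos i))), Real.log_mul (ne_of_gt hpupos)
          (ne_of_gt (hμpos i))]
        ring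
      rw [Finset.sum_congr rfl (fun i _ => hterm i)]
      rw [Finset.sum_sub_distrib, Finset.sum_sub_distrib, Finset.sum_const, card_univ,
        Fintype.card_fin, hcast]
      ring
    rw [hlog, mul_add, Finset.mul_sum]

/-- App3: sum of mutual informations bounded by entropy of the union -/
lemma app3 (hr : 1 ≤ r) (hμ0 : ∀ A, 0 ≤ μ A) (hsum : ∑ A : Finset (Fin n), μ A = 1) :
    ∑ i : Fin r, (∑ g : Fin r → Finset (Fin n),
        PP μ g * Real.log (JJ μ i (g i) (UU g) / (pu r μ (UU g) * μ (g i))))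
      ≤ - ∑ g : Fin r → Finset (Fin n), PP μ g * Real.log (pu r μ (UU g)) := by
  have hg := gibbs_ineq (univ : Finset (Fin r → Finset (Fin n))) (PP μ) (QQ μ r)
    (fun g _ => PP_nonneg hμ0 g) (fun g _ => QQ_nonneg hμ0 g)
    (fun g _ hP => by
      have hPpos : 0 < PP μ g := lt_of_le_of_ne (PP_nonneg hμ0 g) (Ne.symm hP)
      have hpupos : 0 < pu r μ (UU g) := lt_of_lt_of_le hPpos (PP_le_pu hμ0 g)
      have hJpos : ∀ i : Fin r, 0 < JJ μ i (g i) (UU g) :=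
        fun i => lt_of_lt_of_le hPpos (PP_le_JJ hμ0 g i)
      exact ne_of_gt (div_pos (Finset.prod_pos fun i _ => hJpos i) (pow_pos hpupos _)))
    (PP_sum hsum)
  have hlog0 : Real.log (∑ g : Fin r → Finset (Fin n), QQ μ r g) ≤ 0 :=
    Real.log_nonpos (Finset.sum_nonneg fun g _ => QQ_nonneg hμ0 g) (QQ_sum_le hr hμ0 hsum)
  have hle : ∑ g : Fin r → Finset (Fin n), PP μ g * Real.log (QQ μ r g / PP μ g) ≤ 0 :=
    le_trans hg hlog0
  rw [Finset.sum_congr rfl (fun g _ => log_identity hr hμ0 g)] at hle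
  rw [Finset.sum_add_distrib] at hle
  rw [Finset.sum_comm] at hle
  linarith

/-- entropy of the union is at most n log 2 -/
lemma entropy_le (hμ0 : ∀ A, 0 ≤ μ A) (hsum : ∑ A : Finset (Fin n), μ A = 1) :
    - ∑ g : Fin r → Finset (Fin n), PP μ g * Real.log (pu r μ (UU g))
      ≤ (n : ℝ) * Real.log 2 := by
  have hfib : ∑ g : Fin r → Finset (Fin n), PP μ g * Real.log (pu r μ (UU g))
      = ∑ u : Finset (Fin n), pu r μ u * Real.log (pu r μ u) := by
    rw [sum_fiber_mul (PP μ) (fun u => Real.log (pu r μ u))]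
    rfl
  rw [hfib]
  have hg := gibbs_ineq (univ : Finset (Finset (Fin n))) (pu r μ) (fun _ => (1:ℝ))
    (fun u _ => pu_nonneg hμ0 u) (fun _ _ => zero_le_one)
    (fun _ _ _ => one_ne_zero) (pu_sum hsum)
  have hlhs : ∑ u : Finset (Fin n), pu r μ u * Real.log (1 / pu r μ u)
      = - ∑ u : Finset (Fin n), pu r μ u * Real.log (pu r μ u) := by
    rw [← Finset.sum_neg_distrib]
    apply sum_congr rfl; intro u _
    rw [one_div, Real.log_inv]
    ring
  have hrhs : Real.log (∑ _u : Finset (Fin n), (1:ℝ)) = (n : ℝ) * Real.log 2 := by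
    rw [Finset.sum_const, card_univ]
    have : (Fintype.card (Finset (Fin n)) : ℝ) = 2 ^ n := by
      rw [Fintype.card_finset, Fintype.card_fin]
      push_cast
      ring
    rw [nsmul_eq_mul, mul_one, this, Real.log_pow]
  rw [← hlhs, ← hrhs]
  exact hg

end CovAux


/-- **Covering lemma.** Let `n ≥ r ≥ 1` and let `μ` be a probability distribution on
`2^[n]`. If `A₀, A₁, …, A_r` are drawn independently from `μ`, then the probability that
`A₀ ⊆ A₁ ∪ ⋯ ∪ A_r` is at least `2^(−n/r − 2)`. The probability is expressed as the sum,
over all tuples `(A₀, g)` with `A₀ ⊆ ⋃ i, g i`, of `μ(A₀)·∏ i, μ(g i)`. -/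
theorem covering_lemma (n r : ℕ) (hr : 1 ≤ r) (hn : r ≤ n)
    (μ : Finset (Fin n) → ℝ) (hμ0 : ∀ A, 0 ≤ μ A) (hμ1 : ∀ A, μ A ≤ 1)
    (hsum : ∑ A : Finset (Fin n), μ A = 1) :
    (2 : ℝ) ^ (-(n : ℝ) / (r : ℝ) - 2) ≤
      ∑ A₀ : Finset (Fin n), ∑ g : Fin r → Finset (Fin n),
        (if A₀ ⊆ Finset.univ.biUnion g then μ A₀ * ∏ i, μ (g i) else 0) := by
  classical
  open CovAux in
  have hgoal : (∑ A₀ : Finset (Fin n), ∑ g : Fin r → Finset (Fin n),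
        (if A₀ ⊆ Finset.univ.biUnion g then μ A₀ * ∏ i, μ (g i) else 0))
      = ∑ g : Fin r → Finset (Fin n), PP μ g * FF μ (UU g) := by
    rw [Finset.sum_comm]
    apply Finset.sum_congr rfl
    intro g _
    rw [Finset.sum_ite, Finset.sum_const_zero, add_zero, ← Finset.sum_mul, mul_comm]
    rfl
  rw [hgoal]
  set q := ∑ g : Fin r → Finset (Fin n), PP μ g * FF μ (UU g) with hq
  have hqu : q = ∑ u : Finset (Fin n), pu r μ u * FF μ u := by
    rw [hq, sum_fiber_mul (PP μ) (FF μ)]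
    rfl
  -- q is positive
  have hq_pos : 0 < q := by
    obtain ⟨A, _, hA⟩ := Finset.exists_ne_zero_of_sum_ne_zero
      (by rw [hsum]; exact one_ne_zero : ∑ A : Finset (Fin n), μ A ≠ 0)
    have hApos : 0 < μ A := lt_of_le_of_ne (hμ0 A) (Ne.symm hA)
    set g0 : Fin r → Finset (Fin n) := fun _ => A with hg0
    have hP0 : 0 < PP μ g0 := Finset.prod_pos fun i _ => hApos
    have hF0 : 0 < FF μ (UU g0) := by
      calc (0:ℝ) < μ A := hApos
        _ ≤ FF μ (UU g0) := mu_le_FF hμ0 (subset_UU g0 ⟨0, hr⟩)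
    calc (0:ℝ) < PP μ g0 * FF μ (UU g0) := mul_pos hP0 hF0
      _ ≤ q := by
          rw [hq]
          exact Finset.single_le_sum
            (fun g _ => mul_nonneg (PP_nonneg hμ0 g) (FF_nonneg hμ0 _)) (mem_univ g0)
  -- App1 : Jensen for log
  set S := ∑ u : Finset (Fin n), pu r μ u * Real.log (FF μ u) with hSdef
  have hS : S ≤ Real.log q := by
    have hg := gibbs_ineq (univ : Finset (Finset (Fin n))) (pu r μ)
      (fun u => pu r μ u * FF μ u)
      (fun u _ => pu_nonneg hμ0 u)
      (fun u _ => mul_nonneg (pu_nonneg hμ0 u) (FF_nonneg hμ0 u))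
      (fun u _ hne => mul_ne_zero hne (ne_of_gt (FF_pos hr hμ0 hne)))
      (pu_sum hsum)
    have hLHS : ∑ u : Finset (Fin n),
        pu r μ u * Real.log ((pu r μ u * FF μ u) / pu r μ u) = S := by
      apply Finset.sum_congr rfl
      intro u _
      rcases eq_or_ne (pu r μ u) 0 with hpu | hpu
      · rw [hpu]; simp
      · rw [mul_comm (pu r μ u) (FF μ u), mul_div_assoc, div_self hpu, mul_one]
    rw [← hqu] at hg
    calc S = ∑ u : Finset (Fin n),
          pu r μ u * Real.log ((pu r μ u * FF μ u) / pu r μ u) := hLHS.symm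
      _ ≤ Real.log q := hg
  -- App2 : per-coordinate bound -I i ≤ S
  have hI : ∀ i : Fin r,
      -(∑ g : Fin r → Finset (Fin n),
          PP μ g * Real.log (JJ μ i (g i) (UU g) / (pu r μ (UU g) * μ (g i)))) ≤ S := by
    intro i
    have h1 : -(∑ g : Fin r → Finset (Fin n),
          PP μ g * Real.log (JJ μ i (g i) (UU g) / (pu r μ (UU g) * μ (g i))))
        = ∑ g : Fin r → Finset (Fin n),
            PP μ g * Real.log (pu r μ (UU g) * μ (g i) / JJ μ i (g i) (UU g)) := by
      rw [← Finset.sum_neg_distrib]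
      apply Finset.sum_congr rfl
      intro g _
      rw [neg_mul_eq_mul_neg, ← Real.log_inv, inv_div]
    rw [h1]
    rw [sum_fiber2 i (PP μ) (fun a u => Real.log (pu r μ u * μ a / JJ μ i a u))]
    rw [hSdef]
    apply Finset.sum_le_sum
    intro u _
    exact app2 hr hμ0 i u
  -- combine with App3 and the entropy bound
  have hrpos : (0:ℝ) < (r:ℝ) := by
    have : 0 < r := hr
    exact_mod_cast this
  have hKey : -((n:ℝ) * Real.log 2) ≤ (r:ℝ) * S := by
    have hA := app3 (μ := μ) hr hμ0 hsum
    have hB := entropy_le (r := r) (μ := μ) hμ0 hsum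
    have hC : ∑ _i : Fin r, S = (r:ℝ) * S := by
      rw [Finset.sum_const, card_univ, Fintype.card_fin, nsmul_eq_mul]
    calc -((n:ℝ) * Real.log 2)
        ≤ -(∑ i : Fin r, (∑ g : Fin r → Finset (Fin n),
            PP μ g * Real.log (JJ μ i (g i) (UU g) / (pu r μ (UU g) * μ (g i))))) := by
          have := le_trans hA hB
          linarith
      _ = ∑ i : Fin r, -(∑ g : Fin r → Finset (Fin n),
            PP μ g * Real.log (JJ μ i (g i) (UU g) / (pu r μ (UU g) * μ (g i)))) := by
          rw [Finset.sum_neg_distrib]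
      _ ≤ ∑ _i : Fin r, S := Finset.sum_le_sum (fun i _ => hI i)
      _ = (r:ℝ) * S := hC
  have hlogq : -(n:ℝ) / (r:ℝ) * Real.log 2 ≤ Real.log q := by
    have heq : -(n:ℝ) / (r:ℝ) * Real.log 2 = (-((n:ℝ) * Real.log 2)) / (r:ℝ) := by ring
    have h6 : -(n:ℝ) / (r:ℝ) * Real.log 2 ≤ S := by
      rw [heq, div_le_iff₀ hrpos]
      calc -((n:ℝ) * Real.log 2) ≤ (r:ℝ) * S := hKey
        _ = S * (r:ℝ) := by ring
    linarith
  calc (2:ℝ) ^ (-(n:ℝ)/(r:ℝ) - 2)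
      ≤ (2:ℝ) ^ (-(n:ℝ)/(r:ℝ)) :=
        Real.rpow_le_rpow_of_exponent_le one_le_two (by linarith)
    _ = Real.exp (Real.log 2 * (-(n:ℝ)/(r:ℝ))) := Real.rpow_def_of_pos two_pos _
    _ ≤ Real.exp (Real.log q) := by
        apply Real.exp_le_exp.mpr
        calc Real.log 2 * (-(n:ℝ)/(r:ℝ)) = -(n:ℝ)/(r:ℝ) * Real.log 2 := by ring
          _ ≤ Real.log q := hlogq
    _ = q := Real.exp_log hq_pos
end

section
/- Let H be a bipartite graph with parts X and Y and with at least ε·|X|·|Y| edges, where ε ∈ (0, 1]. Then there exist subsets X' ⊆ X and Y' ⊆ Y such that |X'|·|Y'| ≥ (ε/2)·|X|·|Y|, and for every x ∈ X' the number of neighbours of x in Y' is at least ε·|Y|/4, and for every y ∈ Y' the number of neighbours of y in X' is at least ε·|X|/4. -/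
open Finset

private lemma clean_aux {α β : Type*} [DecidableEq α] [DecidableEq β] (a b : ℝ) :
    ∀ (n : ℕ) (X' : Finset α) (Y' : Finset β), X'.card + Y'.card = n →
    ∀ (E' : Finset (α × β)), E' ⊆ X' ×ˢ Y' →
    ∃ X'' ⊆ X', ∃ Y'' ⊆ Y',
      (E'.card : ℝ) - a * ((X'.card : ℝ) - X''.card) - b * ((Y'.card : ℝ) - Y''.card)
        ≤ ((E' ∩ X'' ×ˢ Y'').card : ℝ) ∧
      (∀ x ∈ X'', a ≤ ((Y''.filter fun y => (x, y) ∈ E').card : ℝ)) ∧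
      (∀ y ∈ Y'', b ≤ ((X''.filter fun x => (x, y) ∈ E').card : ℝ)) := by
  intro n
  induction n using Nat.strong_induction_on with
  | _ n IH =>
    intro X' Y' hn E' hE'
    by_cases hX : ∀ x ∈ X', a ≤ ((Y'.filter fun y => (x, y) ∈ E').card : ℝ)
    · by_cases hY : ∀ y ∈ Y', b ≤ ((X'.filter fun x => (x, y) ∈ E').card : ℝ)
      · refine ⟨X', le_refl _, Y', le_refl _, ?_, hX, hY⟩
        rw [Finset.inter_eq_left.mpr hE']
        simp
      · -- remove a bad y
        push_neg at hY
        obtain ⟨y, hyY, hy⟩ := hY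
        set E₂ := E'.filter (fun e => e.2 ≠ y) with hE₂def
        have hsub : E₂ ⊆ X' ×ˢ (Y'.erase y) := by
          intro e he
          simp only [hE₂def, Finset.mem_filter] at he
          have := hE' he.1
          simp only [Finset.mem_product] at this ⊢
          exact ⟨this.1, Finset.mem_erase.mpr ⟨he.2, this.2⟩⟩
        have hypos : 0 < Y'.card := Finset.card_pos.mpr ⟨y, hyY⟩
        have hcard_lt : X'.card + (Y'.erase y).card < n := by
          rw [Finset.card_erase_of_mem hyY]; omega
        obtain ⟨X'', hX''sub, Y'', hY''sub, hineq, hdx, hdy⟩ :=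
          IH _ hcard_lt X' (Y'.erase y) rfl E₂ hsub
        have hY''sub' : Y'' ⊆ Y' := hY''sub.trans (Finset.erase_subset _ _)
        have hynotin : y ∉ Y'' := fun h => (Finset.mem_erase.mp (hY''sub h)).1 rfl
        -- E₂ ∩ X'' ×ˢ Y'' = E' ∩ X'' ×ˢ Y''
        have hinter : E₂ ∩ X'' ×ˢ Y'' = E' ∩ X'' ×ˢ Y'' := by
          ext e
          simp only [hE₂def, Finset.mem_inter, Finset.mem_filter, Finset.mem_product]
          constructor
          · rintro ⟨⟨h1, _⟩, h2⟩; exact ⟨h1, h2⟩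
          · rintro ⟨h1, h2⟩
            exact ⟨⟨h1, fun hey => hynotin (hey ▸ h2.2)⟩, h2⟩
        -- degree filters agree
        have hfil : ∀ x ∈ X'', (Y''.filter fun z => (x, z) ∈ E₂) =
            (Y''.filter fun z => (x, z) ∈ E') := by
          intro x hx
          apply Finset.filter_congr
          intro z hz
          simp only [hE₂def, Finset.mem_filter, eq_iff_iff]
          constructor
          · rintro ⟨h1, _⟩; exact h1
          · intro h1; exact ⟨h1, fun hzy => hynotin (hzy ▸ hz)⟩
        have hfil2 : ∀ z ∈ Y'', (X''.filter fun x => (x, z) ∈ E₂) =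
            (X''.filter fun x => (x, z) ∈ E') := by
          intro z hz
          apply Finset.filter_congr
          intro x hx
          simp only [hE₂def, Finset.mem_filter, eq_iff_iff]
          constructor
          · rintro ⟨h1, _⟩; exact h1
          · intro h1; exact ⟨h1, fun hzy => hynotin (hzy ▸ hz)⟩
        refine ⟨X'', hX''sub, Y'', hY''sub', ?_, ?_, ?_⟩
        · -- arithmetic
          have hEsplit : (E'.card : ℝ) ≤ (E₂.card : ℝ) +
              ((X'.filter fun x => (x, y) ∈ E').card : ℝ) := by
            have h1 : (E'.filter fun e => e.2 = y).card + (E'.filter fun e => ¬ e.2 = y).card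
                = E'.card := Finset.card_filter_add_card_filter_not _
            have h2 : (E'.filter fun e => e.2 = y).card ≤
                (X'.filter fun x => (x, y) ∈ E').card := by
              apply Finset.card_le_card_of_injOn (fun e => e.1)
              · intro e he
                simp only [Finset.mem_coe, Finset.mem_filter] at he ⊢
                have hp := hE' he.1
                simp only [Finset.mem_product] at hp
                refine ⟨hp.1, ?_⟩
                rcases e with ⟨e1, e2⟩
                exact he.2 ▸ he.1
              · intro e he e' he' hee
                simp only [Finset.mem_coe, Finset.mem_filter] at he he'
                exact Prod.ext hee (he.2.trans he'.2.symm)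
            have : E₂ = E'.filter fun e => ¬ e.2 = y := rfl
            rw [this]
            push_cast [← h1]
            linarith [(Nat.cast_le (α := ℝ)).mpr h2]
          have hcast : ((Y'.erase y).card : ℝ) = (Y'.card : ℝ) - 1 := by
            rw [Finset.card_erase_of_mem hyY]
            push_cast [Nat.cast_sub hypos]
            ring
          rw [hinter] at hineq
          rw [hcast] at hineq
          linarith
        · intro x hx
          have := hdx x hx
          rwa [hfil x hx] at this
        · intro z hz
          have := hdy z hz
          rwa [hfil2 z hz] at this
    · -- remove a bad x
      push_neg at hX
      obtain ⟨x, hxX, hx⟩ := hX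
      set E₂ := E'.filter (fun e => e.1 ≠ x) with hE₂def
      have hsub : E₂ ⊆ (X'.erase x) ×ˢ Y' := by
        intro e he
        simp only [hE₂def, Finset.mem_filter] at he
        have := hE' he.1
        simp only [Finset.mem_product] at this ⊢
        exact ⟨Finset.mem_erase.mpr ⟨he.2, this.1⟩, this.2⟩
      have hxpos : 0 < X'.card := Finset.card_pos.mpr ⟨x, hxX⟩
      have hcard_lt : (X'.erase x).card + Y'.card < n := by
        rw [Finset.card_erase_of_mem hxX]; omega
      obtain ⟨X'', hX''sub, Y'', hY''sub, hineq, hdx, hdy⟩ :=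
        IH _ hcard_lt (X'.erase x) Y' rfl E₂ hsub
      have hX''sub' : X'' ⊆ X' := hX''sub.trans (Finset.erase_subset _ _)
      have hxnotin : x ∉ X'' := fun h => (Finset.mem_erase.mp (hX''sub h)).1 rfl
      have hinter : E₂ ∩ X'' ×ˢ Y'' = E' ∩ X'' ×ˢ Y'' := by
        ext e
        simp only [hE₂def, Finset.mem_inter, Finset.mem_filter, Finset.mem_product]
        constructor
        · rintro ⟨⟨h1, _⟩, h2⟩; exact ⟨h1, h2⟩
        · rintro ⟨h1, h2⟩
          exact ⟨⟨h1, fun hex => hxnotin (hex ▸ h2.1)⟩, h2⟩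
      have hfil : ∀ z ∈ X'', (Y''.filter fun w => (z, w) ∈ E₂) =
          (Y''.filter fun w => (z, w) ∈ E') := by
        intro z hz
        apply Finset.filter_congr
        intro w hw
        simp only [hE₂def, Finset.mem_filter, eq_iff_iff]
        constructor
        · rintro ⟨h1, _⟩; exact h1
        · intro h1; exact ⟨h1, fun hzx => hxnotin (hzx ▸ hz)⟩
      have hfil2 : ∀ w ∈ Y'', (X''.filter fun z => (z, w) ∈ E₂) =
          (X''.filter fun z => (z, w) ∈ E') := by
        intro w hw
        apply Finset.filter_congr
        intro z hz
        simp only [hE₂def, Finset.mem_filter, eq_iff_iff]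
        constructor
        · rintro ⟨h1, _⟩; exact h1
        · intro h1; exact ⟨h1, fun hzx => hxnotin (hzx ▸ hz)⟩
      refine ⟨X'', hX''sub', Y'', hY''sub, ?_, ?_, ?_⟩
      · have hEsplit : (E'.card : ℝ) ≤ (E₂.card : ℝ) +
            ((Y'.filter fun w => (x, w) ∈ E').card : ℝ) := by
          have h1 : (E'.filter fun e => e.1 = x).card + (E'.filter fun e => ¬ e.1 = x).card
              = E'.card := Finset.card_filter_add_card_filter_not _
          have h2 : (E'.filter fun e => e.1 = x).card ≤
              (Y'.filter fun w => (x, w) ∈ E').card := by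
            apply Finset.card_le_card_of_injOn (fun e => e.2)
            · intro e he
              simp only [Finset.mem_coe, Finset.mem_filter] at he ⊢
              have hp := hE' he.1
              simp only [Finset.mem_product] at hp
              refine ⟨hp.2, ?_⟩
              rcases e with ⟨e1, e2⟩
              exact he.2 ▸ he.1
            · intro e he e' he' hee
              simp only [Finset.mem_coe, Finset.mem_filter] at he he'
              exact Prod.ext (he.2.trans he'.2.symm) hee
          have : E₂ = E'.filter fun e => ¬ e.1 = x := rfl
          rw [this]
          push_cast [← h1]
          linarith [(Nat.cast_le (α := ℝ)).mpr h2]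
        have hcast : ((X'.erase x).card : ℝ) = (X'.card : ℝ) - 1 := by
          rw [Finset.card_erase_of_mem hxX]
          push_cast [Nat.cast_sub hxpos]
          ring
        rw [hinter] at hineq
        rw [hcast] at hineq
        linarith
      · intro z hz
        have := hdx z hz
        rwa [hfil z hz] at this
      · intro w hw
        have := hdy w hw
        rwa [hfil2 w hw] at this

/-- **Cleaning lemma: subgraphs of large minimum degree.** Let `H` be a bipartite graph
with parts `X`, `Y` and edge set `E ⊆ X × Y` with at least `ε·|X|·|Y|` edges, where
`ε ∈ (0, 1]`. Then there exist `X' ⊆ X` and `Y' ⊆ Y` with `|X'|·|Y'| ≥ (ε/2)·|X|·|Y|`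
such that every `x ∈ X'` has at least `ε·|Y|/4` neighbours in `Y'` and every `y ∈ Y'`
has at least `ε·|X|/4` neighbours in `X'`. -/
theorem cleaning_lemma {α β : Type*} [DecidableEq α] [DecidableEq β]
    (X : Finset α) (Y : Finset β) (E : Finset (α × β)) (hE : E ⊆ X ×ˢ Y)
    (ε : ℝ) (hε : ε ∈ Set.Ioc (0 : ℝ) 1)
    (hcard : ε * ((X.card : ℝ) * (Y.card : ℝ)) ≤ (E.card : ℝ)) :
    ∃ X' ⊆ X, ∃ Y' ⊆ Y,
      (ε / 2) * ((X.card : ℝ) * (Y.card : ℝ)) ≤ (X'.card : ℝ) * (Y'.card : ℝ) ∧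
      (∀ x ∈ X', ε * (Y.card : ℝ) / 4 ≤ ((Y'.filter fun y => (x, y) ∈ E).card : ℝ)) ∧
      (∀ y ∈ Y', ε * (X.card : ℝ) / 4 ≤ ((X'.filter fun x => (x, y) ∈ E).card : ℝ)) := by
  obtain ⟨hε0, hε1⟩ := hε
  obtain ⟨X', hX'sub, Y', hY'sub, hineq, hdx, hdy⟩ :=
    clean_aux (ε * (Y.card : ℝ) / 4) (ε * (X.card : ℝ) / 4) (X.card + Y.card) X Y rfl E hE
  refine ⟨X', hX'sub, Y', hY'sub, ?_, hdx, hdy⟩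
  have hEle : ((E ∩ X' ×ˢ Y').card : ℝ) ≤ (X'.card : ℝ) * Y'.card := by
    have : (E ∩ X' ×ˢ Y').card ≤ (X' ×ˢ Y').card :=
      Finset.card_le_card (Finset.inter_subset_right)
    rw [Finset.card_product] at this
    exact_mod_cast this
  have hX'le : (X'.card : ℝ) ≤ X.card := by
    exact_mod_cast Finset.card_le_card hX'sub
  have hY'le : (Y'.card : ℝ) ≤ Y.card := by
    exact_mod_cast Finset.card_le_card hY'sub
  have hX0 : (0 : ℝ) ≤ (X'.card : ℝ) := Nat.cast_nonneg _
  have hY0 : (0 : ℝ) ≤ (Y'.card : ℝ) := Nat.cast_nonneg _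
  have h1 : ε * (Y.card : ℝ) / 4 * ((X.card : ℝ) - X'.card) ≤ ε * (Y.card : ℝ) / 4 * X.card := by
    apply mul_le_mul_of_nonneg_left (by linarith) (by positivity)
  have h2 : ε * (X.card : ℝ) / 4 * ((Y.card : ℝ) - Y'.card) ≤ ε * (X.card : ℝ) / 4 * Y.card := by
    apply mul_le_mul_of_nonneg_left (by linarith) (by positivity)
  nlinarith
end

section
/- There exists an absolute constant C > 0 (e.g. C = e^40) such that for every positive integer k and every p ∈ [0, 1]: H(p) ≤ 1 − (1 − p)^k + C/2^k, where H(p) = p·log₂(1/p) + (1−p)·log₂(1/(1−p)) is the binary entropy function (with the convention H(0) = H(1) = 0). -/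
/-- The binary entropy function `H(p) = p·log₂(1/p) + (1−p)·log₂(1/(1−p))`.
(With Lean's conventions `1/0 = 0` and `logb 2 0 = 0`, this gives `H(0) = H(1) = 0`.) -/
noncomputable def binEnt (p : ℝ) : ℝ :=
  p * Real.logb 2 (1 / p) + (1 - p) * Real.logb 2 (1 / (1 - p))

open Real
set_option maxHeartbeats 1000000


lemma log2_pos : (0:ℝ) < Real.log 2 := Real.log_pos one_lt_two

lemma binEnt_eq (p : ℝ) : binEnt p = Real.binEntropy p / Real.log 2 := by
  unfold binEnt Real.binEntropy Real.logb
  rw [one_div, one_div]; ring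

lemma binEnt_le_one (p : ℝ) : binEnt p ≤ 1 := by
  rw [binEnt_eq, div_le_one log2_pos]
  exact Real.binEntropy_le_log_two

lemma mul_log_inv_le {x : ℝ} (hx : 0 < x) : x * Real.log (1/x) ≤ 1 - x := by
  have h : Real.log (1/x) ≤ 1/x - 1 := Real.log_le_sub_one_of_pos (by positivity)
  calc x * Real.log (1/x) ≤ x * (1/x - 1) := by nlinarith
    _ = 1 - x := by field_simp

lemma one_sub_mul_log_le {p : ℝ} (hp1 : p < 1) : (1-p) * Real.log (1/(1-p)) ≤ p := by
  have := mul_log_inv_le (x := 1 - p) (by linarith)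
  linarith

lemma binEnt_le_aux {p : ℝ} (hp1 : p < 1) :
    binEnt p ≤ (p * Real.log (1/p) + p) / Real.log 2 := by
  unfold binEnt Real.logb
  have h := one_sub_mul_log_le hp1
  have e : p * (Real.log (1/p) / Real.log 2) + (1-p) * (Real.log (1/(1-p)) / Real.log 2)
      = (p * Real.log (1/p) + (1-p) * Real.log (1/(1-p))) / Real.log 2 := by ring
  rw [e]
  have hnum : p * Real.log (1/p) + (1-p) * Real.log (1/(1-p)) ≤ p * Real.log (1/p) + p := by
    linarith
  exact div_le_div_of_nonneg_right hnum log2_pos.le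

lemma pow_le_exp_neg {p : ℝ} (hp1 : p ≤ 1) (k : ℕ) :
    (1-p)^k ≤ Real.exp (-((k:ℝ)*p)) := by
  have h1 : (1-p) ≤ Real.exp (-p) := by
    have := Real.add_one_le_exp (-p); linarith
  calc (1-p)^k ≤ (Real.exp (-p))^k := pow_le_pow_left₀ (by linarith) h1 k
    _ = Real.exp (-((k:ℝ)*p)) := by rw [← Real.exp_nat_mul]; ring_nf

lemma exp_neg_le_inv {x : ℝ} (hx : 0 ≤ x) : Real.exp (-x) ≤ 1/(1+x) := by
  rw [Real.exp_neg, one_div]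
  have h := Real.add_one_le_exp x
  exact inv_anti₀ (by linarith) (by linarith)

lemma exp_neg_le_quad {x : ℝ} (hx : 0 ≤ x) (hx1 : x ≤ 1) :
    Real.exp (-x) ≤ 1 - x + (3/4)*x^2 := by
  have h := Real.exp_bound (x := -x) (by rw [abs_neg, abs_of_nonneg hx]; exact hx1)
    (n := 2) (by norm_num)
  rw [abs_neg, abs_of_nonneg hx] at h
  simp [Finset.sum_range_succ] at h
  rw [abs_le] at h
  nlinarith [h.2]

lemma cube_le_exp {x : ℝ} (hx : 0 ≤ x) : x^3/27 ≤ Real.exp x := by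
  have h1 : x/3 ≤ Real.exp (x/3) := by have := Real.add_one_le_exp (x/3); linarith
  have h2 : (x/3)^3 ≤ (Real.exp (x/3))^3 := pow_le_pow_left₀ (by linarith) h1 3
  calc x^3/27 = (x/3)^3 := by ring
    _ ≤ (Real.exp (x/3))^3 := h2
    _ = Real.exp x := by rw [← Real.exp_nat_mul]; push_cast; ring_nf

lemma pow2_cube (k : ℕ) : ((k:ℝ))^3/82 ≤ 2^k := by
  have h1 : Real.exp ((k:ℝ) * Real.log 2) = 2^k := by
    rw [Real.exp_nat_mul, Real.exp_log two_pos]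
  have hl : (0.6931471803:ℝ) < Real.log 2 := Real.log_two_gt_d9
  have hk : (0:ℝ) ≤ k := Nat.cast_nonneg k
  calc ((k:ℝ))^3/82 ≤ ((k:ℝ))^3 * (0.693)^3/27 := by nlinarith [pow_nonneg hk 3]
    _ = ((k:ℝ) * 0.693)^3/27 := by ring
    _ ≤ ((k:ℝ) * Real.log 2)^3/27 := by gcongr (?_)^3/27 <;> nlinarith
    _ ≤ Real.exp ((k:ℝ) * Real.log 2) := cube_le_exp (by positivity)
    _ = 2^k := h1

lemma exp_cubic_bound {s : ℝ} (hs0 : 0 ≤ s) (hs : s ≤ 1) :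
    Real.exp s ≤ 1 + s + s^2/2 + (2/9)*s^3 := by
  have h := Real.exp_bound' hs0 hs (n := 3) (by norm_num)
  simp [Finset.sum_range_succ, Nat.factorial] at h
  nlinarith [h]

lemma log_one_add_ge {s : ℝ} (hs0 : 0 ≤ s) (hs : s ≤ 1/2) :
    s - s^2/2 ≤ Real.log (1+s) := by
  have h1 : Real.exp (s - s^2/2) ≤ 1 + s := by
    have e1 : Real.exp (s - s^2/2) = Real.exp s * Real.exp (-(s^2/2)) := by
      rw [← Real.exp_add]; ring_nf
    have e2 : Real.exp (-(s^2/2)) ≤ 1/(1+s^2/2) := by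
      have h := Real.add_one_le_exp (s^2/2)
      rw [Real.exp_neg, one_div]
      exact inv_anti₀ (by positivity) (by linarith)
    have e3 : Real.exp s ≤ 1 + s + s^2/2 + (2/9)*s^3 :=
      exp_cubic_bound hs0 (by linarith)
    have hpos : (0:ℝ) < 1 + s^2/2 := by positivity
    calc Real.exp (s - s^2/2) = Real.exp s * Real.exp (-(s^2/2)) := e1
      _ ≤ (1 + s + s^2/2 + (2/9)*s^3) * (1/(1+s^2/2)) := by
          apply mul_le_mul e3 e2 (Real.exp_nonneg _) (by positivity)
      _ ≤ 1 + s := by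
          rw [mul_one_div, div_le_iff₀ hpos]
          nlinarith
  calc s - s^2/2 ≤ Real.log (Real.exp (s - s^2/2)) := by rw [Real.log_exp]
    _ ≤ Real.log (1+s) := Real.log_le_log (Real.exp_pos _) h1

lemma log_one_sub_ge {s : ℝ} (hs1 : s < 1) : -s/(1-s) ≤ Real.log (1-s) := by
  have hpos : (0:ℝ) < 1 - s := by linarith
  have h : Real.log (1/(1-s)) ≤ 1/(1-s) - 1 := Real.log_le_sub_one_of_pos (by positivity)
  rw [one_div, Real.log_inv] at h
  rw [div_le_iff₀ hpos]
  have h2 : ((1-s)⁻¹ - 1) * (1-s) = s := by field_simp; ring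
  nlinarith [h, mul_le_mul_of_nonneg_right h hpos.le]

lemma log_2000_le : Real.log 2000 ≤ 8 := by
  have h1 : (2000:ℝ) ≤ Real.exp 8 := by
    have h2 : (2.7182818283:ℝ) < Real.exp 1 := Real.exp_one_gt_d9
    have h3 : ((2.7182818283:ℝ))^8 ≤ (Real.exp 1)^8 :=
      pow_le_pow_left₀ (by norm_num) h2.le 8
    have h4 : (Real.exp 1)^8 = Real.exp 8 := by
      rw [← Real.exp_nat_mul]; norm_num
    nlinarith [h3, h4]
  calc Real.log 2000 ≤ Real.log (Real.exp 8) := Real.log_le_log (by norm_num) h1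
    _ = 8 := Real.log_exp 8

lemma logb_linear_bound {x : ℝ} (hx : 2000 ≤ x) : 2 * Real.logb 2 x + 2 ≤ x/41 := by
  have hx0 : (0:ℝ) < x := by linarith
  have h1 : Real.log x = Real.log 2000 + Real.log (x/2000) := by
    rw [← Real.log_mul (by norm_num) (by positivity)]
    ring_nf
  have h1b := Real.log_le_sub_one_of_pos (x := x/2000) (by positivity)
  have h2 : Real.log x ≤ x/2000 + 7 := by
    have := log_2000_le; linarith
  have hl : (0.6931471803:ℝ) < Real.log 2 := Real.log_two_gt_d9
  rw [Real.logb]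
  have hq : Real.log x / Real.log 2 ≤ (x/2000 + 7) / 0.6931471803 :=
    div_le_div₀ (by linarith) h2 (by norm_num) hl.le
  have key : 2*((x/2000+7)/0.6931471803) + 2 ≤ x/41 := by
    have h : 2*((x/2000+7)/0.6931471803) + 2 = (2*(x/2000+7) + 2*0.6931471803)/0.6931471803 := by
      field_simp
    rw [h, div_le_iff₀ (by norm_num : (0:ℝ) < 0.6931471803)]
    nlinarith
  linarith [hq]

lemma cube_le_exp' {x : ℝ} (hx : 0 ≤ x) : x^3/27 ≤ Real.exp x := cube_le_exp hx

lemma pow34_le {k : ℕ} (hk : 1 ≤ k) : ((3:ℝ)/4)^k ≤ 1728/(k:ℝ)^3 := by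
  have hk0 : (0:ℝ) < k := by exact_mod_cast hk
  have h1 : ((3:ℝ)/4) ≤ Real.exp (-(1/4)) := by
    rw [Real.exp_neg]
    rw [le_inv_comm₀ (by norm_num) (Real.exp_pos _)]
    have h2 : Real.exp (1/4) ^ 4 = Real.exp 1 := by
      rw [← Real.exp_nat_mul]; norm_num
    have h3 : Real.exp 1 < 2.7182818286 := Real.exp_one_lt_d9
    by_contra hcon
    push_neg at hcon
    have h9 : ((3:ℝ)/4)⁻¹ ^ 4 < Real.exp (1/4) ^ 4 :=
      pow_lt_pow_left₀ hcon (by norm_num) (by norm_num)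
    rw [h2] at h9
    norm_num at h9
    linarith
  have h4 : ((3:ℝ)/4)^k ≤ Real.exp (-(1/4))^k := pow_le_pow_left₀ (by norm_num) h1 k
  have h5 : Real.exp (-(1/4:ℝ))^k = Real.exp (-(k/4:ℝ)) := by
    rw [← Real.exp_nat_mul]; ring_nf
  have h6 : ((k:ℝ)/4)^3/27 ≤ Real.exp ((k:ℝ)/4) := cube_le_exp' (by positivity)
  have h7 : Real.exp (-(k/4:ℝ)) = 1/Real.exp ((k:ℝ)/4) := by
    rw [Real.exp_neg]; ring
  rw [h5, h7] at h4
  have h8 : 1/Real.exp ((k:ℝ)/4) ≤ 1/(((k:ℝ)/4)^3/27) := by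
    apply one_div_le_one_div_of_le (by positivity) h6
  calc ((3:ℝ)/4)^k ≤ 1/(((k:ℝ)/4)^3/27) := h4.trans h8
    _ = 1728/(k:ℝ)^3 := by field_simp; ring

lemma exp1200_le : Real.exp 1200 ≤ (2:ℝ)^(2000:ℕ) := by
  have h3 : Real.exp 1 < 2.7182818286 := Real.exp_one_lt_d9
  have h1 : Real.exp 3 ≤ 32 := by
    have h2 : Real.exp 3 = (Real.exp 1)^3 := by rw [← Real.exp_nat_mul]; norm_num
    have h9 : (Real.exp 1)^3 ≤ (2.7182818286:ℝ)^3 :=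
      pow_le_pow_left₀ (Real.exp_nonneg _) h3.le 3
    rw [← h2] at h9
    nlinarith [h9]
  have h4 : Real.exp 1200 = (Real.exp 3)^(400:ℕ) := by
    rw [← Real.exp_nat_mul]; norm_num
  calc Real.exp 1200 = (Real.exp 3)^(400:ℕ) := h4
    _ ≤ (32:ℝ)^(400:ℕ) := pow_le_pow_left₀ (Real.exp_nonneg _) h1 400
    _ = (2:ℝ)^(2000:ℕ) := by
        rw [show (32:ℝ) = 2^(5:ℕ) by norm_num, ← pow_mul]


lemma regionTiny {k : ℕ} (hK : 2000 ≤ (k:ℝ)) {p : ℝ} (hp0 : 0 < p)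
    (hpa : p ≤ 8/2^k) : binEnt p ≤ 1 - (1-p)^k + 2^(2000:ℕ)/2^k := by
  set K : ℝ := (k:ℝ) with hKdef
  have h2k : (0:ℝ) < 2^k := by positivity
  have hcube : K^3/82 ≤ 2^k := pow2_cube k
  have hK3 : (2000:ℝ)^3 ≤ K^3 := pow_le_pow_left₀ (by norm_num) hK 3
  have hKpos : (0:ℝ) < K := by linarith
  -- p ≤ 656/K^3
  have hp656 : p ≤ 656/K^3 := by
    have h1 : (8:ℝ)/2^k ≤ 8/(K^3/82) := by
      apply div_le_div_of_nonneg_left (by norm_num) (by positivity) hcube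
    calc p ≤ 8/2^k := hpa
      _ ≤ 8/(K^3/82) := h1
      _ = 656/K^3 := by field_simp; ring
  have hp1 : p < 1 := by
    have : (656:ℝ)/K^3 ≤ 656/2000^3 := by
      apply div_le_div_of_nonneg_left (by norm_num) (by positivity) (by linarith)
    nlinarith
  have hKp1 : K*p ≤ 1 := by
    have : K*p ≤ K*(656/K^3) := by nlinarith
    have h2 : K*(656/K^3) = 656/K^2 := by field_simp
    have h3 : (656:ℝ)/K^2 ≤ 656/2000^2 := by
      apply div_le_div_of_nonneg_left (by norm_num) (by positivity) (by nlinarith)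
    nlinarith
  -- lower bound on RHS
  have hpow : (1-p)^k ≤ 1 - K*p + (3/4)*(K*p)^2 := by
    calc (1-p)^k ≤ Real.exp (-(K*p)) := pow_le_exp_neg hp1.le k
      _ ≤ 1 - K*p + (3/4)*(K*p)^2 := exp_neg_le_quad (by positivity) hKp1
  -- upper bound on binEnt
  have hl : (0.6931471803:ℝ) < Real.log 2 := Real.log_two_gt_d9
  have hl2 : Real.log 2 < 0.6931471808 := Real.log_two_lt_d9
  set a : ℝ := 8/2^k with hadef
  have ha0 : 0 < a := by positivity
  have hloga : Real.log a = Real.log 8 - K * Real.log 2 := by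
    rw [hadef, Real.log_div (by norm_num) (by positivity), Real.log_pow]
  have hlog1p : Real.log (1/p) = Real.log (a/p) + (K * Real.log 2 - Real.log 8) := by
    rw [one_div, Real.log_inv, Real.log_div (ne_of_gt ha0) (ne_of_gt hp0), hloga]
    ring
  have hpa' : p * Real.log (a/p) ≤ a := by
    have hx : (0:ℝ) < p/a := by positivity
    have h := mul_log_inv_le hx
    have e : (1:ℝ)/(p/a) = a/p := by field_simp
    rw [e] at h
    have h2 := mul_le_mul_of_nonneg_left h ha0.le
    calc p * Real.log (a/p) = a * ((p/a) * Real.log (a/p)) := by field_simp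
      _ ≤ a * (1 - p/a) := h2
      _ ≤ a := by nlinarith [div_nonneg hp0.le ha0.le]
  have hlog8 : Real.log 8 = 3 * Real.log 2 := by
    rw [show (8:ℝ) = 2^(3:ℕ) by norm_num, Real.log_pow]; norm_num
  have hEnt : binEnt p ≤ (a + (K-3) * Real.log 2 * p + p)/Real.log 2 := by
    have h := binEnt_le_aux hp1
    have h2 : p * Real.log (1/p) ≤ a + (K-3) * Real.log 2 * p := by
      rw [hlog1p, hlog8]
      nlinarith [hpa']
    calc binEnt p ≤ (p * Real.log (1/p) + p)/Real.log 2 := h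
      _ ≤ (a + (K-3) * Real.log 2 * p + p)/Real.log 2 := by
          apply div_le_div_of_nonneg_right (by linarith) log2_pos.le
  -- combine
  have hK2p : K^2*p ≤ 656/K := by
    have : K^2*p ≤ K^2*(656/K^3) := by nlinarith
    have h2 : K^2*(656/K^3) = 656/K := by field_simp
    linarith
  have hC : (12:ℝ) ≤ 2^(2000:ℕ) := by
    calc (12:ℝ) ≤ 2^(4:ℕ) := by norm_num
      _ ≤ 2^(2000:ℕ) := pow_le_pow_right₀ one_le_two (by norm_num)
  have ha12 : a/Real.log 2 ≤ 2^(2000:ℕ)/2^k := by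
    have e : a/Real.log 2 = (8/Real.log 2)/2^k := by rw [hadef]; ring
    rw [e]
    have h8 : 8/Real.log 2 ≤ 12 := by
      rw [div_le_iff₀ log2_pos]; nlinarith
    calc (8/Real.log 2)/2^k ≤ 12/2^k := div_le_div_of_nonneg_right h8 h2k.le
      _ ≤ 2^(2000:ℕ)/2^k := div_le_div_of_nonneg_right hC h2k.le
  -- final arithmetic
  have hfinal : (K-3) * Real.log 2 * p + p ≤ (K*p - (3/4)*(K*p)^2) * Real.log 2 := by
    have h656 : K^2*p ≤ 0.33 := by
      have : (656:ℝ)/K ≤ 0.33 := by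
        rw [div_le_iff₀ hKpos]; linarith
      linarith
    have hA : K^2*p*p ≤ 0.33*p := mul_le_mul_of_nonneg_right h656 hp0.le
    have hB : K^2*p*p*Real.log 2 ≤ 0.33*p*Real.log 2 := mul_le_mul_of_nonneg_right hA log2_pos.le
    have hB2 : 0.33*p*Real.log 2 ≤ 0.33*p*0.6931471808 :=
      mul_le_mul_of_nonneg_left hl2.le (by positivity)
    nlinarith [hp0, hB, hB2, hl]
  have e3 : (a + (K-3) * Real.log 2 * p + p)/Real.log 2
      = a/Real.log 2 + ((K-3) * Real.log 2 * p + p)/Real.log 2 := by ring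
  have h4 : ((K-3) * Real.log 2 * p + p)/Real.log 2 ≤ K*p - (3/4)*(K*p)^2 := by
    rw [div_le_iff₀ log2_pos]
    linarith [hfinal]
  calc binEnt p ≤ (a + (K-3) * Real.log 2 * p + p)/Real.log 2 := hEnt
    _ = a/Real.log 2 + ((K-3) * Real.log 2 * p + p)/Real.log 2 := e3
    _ ≤ 2^(2000:ℕ)/2^k + (K*p - (3/4)*(K*p)^2) := by
        have := ha12; have := h4; linarith
    _ ≤ 1 - (1-p)^k + 2^(2000:ℕ)/2^k := by linarith [hpow]

lemma regionSmall {k : ℕ} (hK : 2000 ≤ (k:ℝ)) {p : ℝ} (hp0 : 0 < p)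
    (hpa : 8/2^k ≤ p) (hpb : p ≤ 1/(k:ℝ)^2) :
    binEnt p ≤ 1 - (1-p)^k := by
  set K : ℝ := (k:ℝ) with hKdef
  have hKpos : (0:ℝ) < K := by linarith
  have h2k : (0:ℝ) < 2^k := by positivity
  have hp1 : p < 1 := by
    have : (1:ℝ)/K^2 ≤ 1/2000^2 := by
      apply div_le_div_of_nonneg_left (by norm_num) (by positivity) (by nlinarith)
    nlinarith
  have hKp1 : K*p ≤ 1 := by
    have h1 : K*p ≤ K*(1/K^2) := by nlinarith
    have h2 : K*(1/K^2) = 1/K := by field_simp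
    have : (1:ℝ)/K ≤ 1 := by rw [div_le_one hKpos]; linarith
    linarith [h1, h2.symm ▸ h1]
  have hl : (0.6931471803:ℝ) < Real.log 2 := Real.log_two_gt_d9
  have hl2 : Real.log 2 < 0.6931471808 := Real.log_two_lt_d9
  -- log(1/p) ≤ (K-3) log 2
  have hlog : Real.log (1/p) ≤ (K-3) * Real.log 2 := by
    have h1 : (1:ℝ)/p ≤ 2^k/8 := by
      rw [div_le_div_iff₀ hp0 (by norm_num : (0:ℝ) < 8)]
      calc (1:ℝ)*8 = 8 := by ring
        _ ≤ 2^k * p := by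
            have := mul_le_mul_of_nonneg_left hpa h2k.le
            calc (8:ℝ) = 2^k * (8/2^k) := by field_simp
              _ ≤ 2^k * p := this
    calc Real.log (1/p) ≤ Real.log (2^k/8) := Real.log_le_log (by positivity) h1
      _ = (K-3) * Real.log 2 := by
          rw [Real.log_div (by positivity) (by norm_num), Real.log_pow,
            show (8:ℝ) = 2^(3:ℕ) by norm_num, Real.log_pow]
          push_cast; ring
  have hEnt : binEnt p ≤ (K-3)*p + p/Real.log 2 := by
    have h := binEnt_le_aux hp1
    have h2 : (p * Real.log (1/p) + p)/Real.log 2 ≤ (K-3)*p + p/Real.log 2 := by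
      have h3 : p * Real.log (1/p) ≤ p * ((K-3) * Real.log 2) :=
        mul_le_mul_of_nonneg_left hlog hp0.le
      rw [div_le_iff₀ log2_pos]
      have e : ((K-3)*p + p/Real.log 2) * Real.log 2 = (K-3)*p*Real.log 2 + p := by
        field_simp
      rw [e]
      nlinarith [h3]
    exact h.trans h2
  have hpow : (1-p)^k ≤ 1 - K*p + (3/4)*(K*p)^2 := by
    calc (1-p)^k ≤ Real.exp (-(K*p)) := pow_le_exp_neg hp1.le k
      _ ≤ 1 - K*p + (3/4)*(K*p)^2 := exp_neg_le_quad (by positivity) hKp1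
  -- (K-3)p + p/log2 ≤ Kp - (3/4)(Kp)^2
  have hK2p : K^2*p ≤ 1 := by
    have h1 : K^2*p ≤ K^2*(1/K^2) := by nlinarith
    have h2 : K^2*(1/K^2) = 1 := by field_simp
    linarith [h1, h2 ▸ h1]
  have hmain : (K-3)*p + p/Real.log 2 ≤ K*p - (3/4)*(K*p)^2 := by
    have hA : K^2*p*p ≤ 1*p := mul_le_mul_of_nonneg_right hK2p hp0.le
    have hinv : p/Real.log 2 ≤ p*1.45 := by
      rw [div_le_iff₀ log2_pos]
      nlinarith [hp0, hl]
    nlinarith [hA, hp0]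
  calc binEnt p ≤ (K-3)*p + p/Real.log 2 := hEnt
    _ ≤ K*p - (3/4)*(K*p)^2 := hmain
    _ ≤ 1 - (1-p)^k := by linarith [hpow]

lemma regionMid {k : ℕ} (hK : 2000 ≤ (k:ℝ)) {p : ℝ} (hp0 : 0 < p)
    (hpa : 1/(k:ℝ)^2 ≤ p) (hpb : p ≤ 40/(k:ℝ)) :
    binEnt p ≤ 1 - (1-p)^k := by
  set K : ℝ := (k:ℝ) with hKdef
  have hKpos : (0:ℝ) < K := by linarith
  have hp1 : p < 1 := by
    have : (40:ℝ)/K ≤ 40/2000 := by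
      apply div_le_div_of_nonneg_left (by norm_num) (by positivity) hK
    linarith
  have hKp40 : K*p ≤ 40 := by
    have h1 : K*p ≤ K*(40/K) := by nlinarith
    have h2 : K*(40/K) = 40 := by field_simp
    linarith [h2 ▸ h1]
  have hl : (0.6931471803:ℝ) < Real.log 2 := Real.log_two_gt_d9
  -- binEnt ≤ p*(2 logb 2 K + 2)
  have hlog : Real.log (1/p) ≤ 2 * Real.log K := by
    have h1 : (1:ℝ)/p ≤ K^2 := by
      rw [div_le_iff₀ hp0]
      have := mul_le_mul_of_nonneg_left hpa (by positivity : (0:ℝ) ≤ K^2)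
      calc (1:ℝ) = K^2 * (1/K^2) := by field_simp
        _ ≤ K^2 * p := this
    calc Real.log (1/p) ≤ Real.log (K^2) := Real.log_le_log (by positivity) h1
      _ = 2 * Real.log K := by
          rw [show K^2 = K^(2:ℕ) by norm_num, Real.log_pow]; norm_num
  have hEnt : binEnt p ≤ p * (2 * Real.logb 2 K + 2) := by
    have h := binEnt_le_aux hp1
    have h2 : (p * Real.log (1/p) + p)/Real.log 2 ≤ p * (2 * Real.logb 2 K + 2) := by
      rw [div_le_iff₀ log2_pos]
      have h3 : p * Real.log (1/p) ≤ p * (2 * Real.log K) :=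
        mul_le_mul_of_nonneg_left hlog hp0.le
      have e : p * (2 * Real.logb 2 K + 2) * Real.log 2
          = p * (2 * Real.log K) + 2 * p * Real.log 2 := by
        rw [Real.logb]; field_simp
      rw [e]
      nlinarith [h3, hp0, hl]
    exact h.trans h2
  have hlin : 2 * Real.logb 2 K + 2 ≤ K/41 := logb_linear_bound hK
  -- 1 - (1-p)^k ≥ Kp/41
  have hpow : (1-p)^k ≤ 1/(1+K*p) := by
    calc (1-p)^k ≤ Real.exp (-(K*p)) := pow_le_exp_neg hp1.le k
      _ ≤ 1/(1+K*p) := exp_neg_le_inv (by positivity)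
  have hfrac : 1/(1+K*p) ≤ 1 - K*p/41 := by
    rw [div_le_iff₀ (by positivity : (0:ℝ) < 1 + K*p)]
    have hKp0 : 0 < K*p := mul_pos hKpos hp0
    nlinarith [hKp0, hKp40]
  calc binEnt p ≤ p * (2 * Real.logb 2 K + 2) := hEnt
    _ ≤ p * (K/41) := mul_le_mul_of_nonneg_left hlin hp0.le
    _ ≤ 1 - (1-p)^k := by
        have : (1-p)^k ≤ 1 - K*p/41 := hpow.trans hfrac
        have e : p * (K/41) = K*p/41 := by ring
        linarith [this]

lemma binEntropy_quarter : Real.binEntropy (1/4 : ℝ) ≤ (7/8) * Real.log 2 := by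
  unfold Real.binEntropy
  have e1 : ((1:ℝ)/4)⁻¹ = 4 := by norm_num
  have e2 : (1 - (1:ℝ)/4) = 3/4 := by norm_num
  have e3 : ((3:ℝ)/4)⁻¹ = 4/3 := by norm_num
  rw [e1, e2, e3]
  have l4 : Real.log 4 = 2 * Real.log 2 := by
    rw [show (4:ℝ) = 2^(2:ℕ) by norm_num, Real.log_pow]; norm_num
  have l43 : Real.log (4/3) = 2 * Real.log 2 - Real.log 3 := by
    rw [Real.log_div (by norm_num) (by norm_num), l4]
  have l89 : 3 * Real.log 2 ≤ 2 * Real.log 3 := by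
    have h : Real.log 8 ≤ Real.log 9 := Real.log_le_log (by norm_num) (by norm_num)
    rw [show (8:ℝ) = 2^(3:ℕ) by norm_num, show (9:ℝ) = 3^(2:ℕ) by norm_num,
      Real.log_pow, Real.log_pow] at h
    push_cast at h; linarith
  rw [l4, l43]
  linarith

lemma regionQuarter {k : ℕ} (hK : 2000 ≤ (k:ℝ)) {p : ℝ} (hp0 : 0 < p)
    (hpa : 40/(k:ℝ) ≤ p) (hpb : p ≤ 1/4) :
    binEnt p ≤ 1 - (1-p)^k := by
  set K : ℝ := (k:ℝ) with hKdef
  have hKpos : (0:ℝ) < K := by linarith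
  have hp1 : p < 1 := by linarith
  have hKp : 40 ≤ K*p := by
    have := mul_le_mul_of_nonneg_left hpa hKpos.le
    calc (40:ℝ) = K * (40/K) := by field_simp
      _ ≤ K * p := this
  have hpow : (1-p)^k ≤ 1/41 := by
    calc (1-p)^k ≤ Real.exp (-(K*p)) := pow_le_exp_neg hp1.le k
      _ ≤ Real.exp (-(40:ℝ)) := by
          rw [Real.exp_le_exp]; linarith
      _ ≤ 1/(1+40) := exp_neg_le_inv (by norm_num)
      _ = 1/41 := by norm_num
  have hmono : Real.binEntropy p ≤ Real.binEntropy (1/4 : ℝ) := by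
    have hmem1 : p ∈ Set.Icc (0:ℝ) 2⁻¹ := ⟨hp0.le, by norm_num at hpb ⊢; linarith⟩
    have hmem2 : (1/4:ℝ) ∈ Set.Icc (0:ℝ) 2⁻¹ := by norm_num
    exact Real.binEntropy_strictMonoOn.monotoneOn hmem1 hmem2 hpb
  have hEnt : binEnt p ≤ 7/8 := by
    rw [binEnt_eq, div_le_iff₀ log2_pos]
    calc Real.binEntropy p ≤ Real.binEntropy (1/4:ℝ) := hmono
      _ ≤ (7/8) * Real.log 2 := binEntropy_quarter
  linarith [hpow, hEnt]

lemma entGap {p : ℝ} (hpa : 1/4 ≤ p) (hpb : p < 1/2) :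
    binEnt p ≤ 1 - (1-2*p)^2/6 := by
  set s : ℝ := 1 - 2*p with hsdef
  clear_value s
  have hs0 : 0 < s := by rw [hsdef]; linarith
  have hs12 : s ≤ 1/2 := by rw [hsdef]; linarith
  have hp0 : (0:ℝ) < p := by linarith
  have hp1 : p < 1 := by linarith
  have h1ps : 1 - s = 2*p := by rw [hsdef]; ring
  have h1as : 1 + s = 2*(1-p) := by rw [hsdef]; ring
  -- identity
  have hid : Real.binEntropy p
      = Real.log 2 - ((1-s)*Real.log (1-s) + (1+s)*Real.log (1+s))/2 := by
    unfold Real.binEntropy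
    rw [h1ps, h1as]
    rw [Real.log_mul (by norm_num) (by positivity),
        Real.log_mul (by norm_num) (show (0:ℝ) < 1-p by linarith).ne']
    rw [Real.log_inv, Real.log_inv]
    ring
  have hF1 : -s ≤ (1-s)*Real.log (1-s) := by
    have h := log_one_sub_ge (s := s) (by linarith)
    have hne : (1-s) ≠ 0 := by
      have : (0:ℝ) < 1-s := by linarith
      exact this.ne'
    have h2 := mul_le_mul_of_nonneg_right h (by linarith : (0:ℝ) ≤ 1-s)
    have e : (-s/(1-s)) * (1-s) = -s := div_mul_cancel₀ _ hne
    have h3 : (1-s) * Real.log (1-s) = Real.log (1-s) * (1-s) := by ring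
    rw [e] at h2
    linarith [h2, h3 ▸ h2]
  have hF2 : (1+s)*(s - s^2/2) ≤ (1+s)*Real.log (1+s) :=
    mul_le_mul_of_nonneg_left (log_one_add_ge hs0.le hs12) (by linarith)
  have hF2' : s + s^2/2 - s^3/2 ≤ (1+s)*Real.log (1+s) := by nlinarith [hF2]
  have hs3 : s^3 ≤ s^2/2 := by nlinarith [sq_nonneg s]
  have hF : s^2/4 ≤ (1-s)*Real.log (1-s) + (1+s)*Real.log (1+s) := by
    linarith [hF1, hF2', hs3]
  have hl2 : Real.log 2 < 0.6931471808 := Real.log_two_lt_d9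
  rw [binEnt_eq, hid]
  rw [div_le_iff₀ log2_pos]
  have h6 : s^2/6*Real.log 2 ≤ s^2/8 := by nlinarith [sq_nonneg s, hl2, log2_pos]
  nlinarith [hF, h6, log2_pos]

lemma regionHalf {k : ℕ} (hK : 2000 ≤ (k:ℝ)) {p : ℝ} (hpa : 1/4 ≤ p)
    (hpb : p < 1/2) : binEnt p ≤ 1 - (1-p)^k + 2^(2000:ℕ)/2^k := by
  set K : ℝ := (k:ℝ) with hKdef
  clear_value K
  have hKpos : (0:ℝ) < K := by linarith
  have h2k : (0:ℝ) < 2^k := by positivity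
  set s : ℝ := 1 - 2*p with hsdef
  clear_value s
  have hs0 : 0 < s := by rw [hsdef]; linarith
  have hs12 : s ≤ 1/2 := by rw [hsdef]; linarith
  have h1p : 1 - p = (1+s)/2 := by rw [hsdef]; ring
  rcases le_or_gt (s*K) 1200 with hcase | hcase
  · -- small s*k : use trivial entropy bound
    have hpow : (1-p)^k ≤ 2^(2000:ℕ)/2^k := by
      have h1 : (1-p) ≤ Real.exp s / 2 := by
        rw [h1p]
        have := Real.add_one_le_exp s
        linarith
      have h2 : (1-p)^k ≤ (Real.exp s / 2)^k :=
        pow_le_pow_left₀ (by rw [h1p]; linarith) h1 k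
      have h3 : (Real.exp s / 2)^k = Real.exp ((k:ℝ)*s) / 2^k := by
        rw [div_pow, ← Real.exp_nat_mul]
      have h4 : Real.exp ((k:ℝ)*s) ≤ Real.exp 1200 := by
        rw [Real.exp_le_exp, ← hKdef]
        nlinarith
      calc (1-p)^k ≤ (Real.exp s / 2)^k := h2
        _ = Real.exp ((k:ℝ)*s) / 2^k := h3
        _ ≤ Real.exp 1200 / 2^k := by
            apply div_le_div_of_nonneg_right h4 h2k.le
        _ ≤ 2^(2000:ℕ)/2^k := div_le_div_of_nonneg_right exp1200_le h2k.le
    have h5 : binEnt p ≤ 1 := binEnt_le_one p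
    have h6 : (0:ℝ) ≤ (1-p)^k := pow_nonneg (by linarith) k
    linarith [hpow]
  · -- large s*k : use entropy gap
    have hgap : binEnt p ≤ 1 - s^2/6 := by
      have := entGap hpa hpb
      rw [← hsdef] at this
      exact this
    have hpow : (1-p)^k ≤ s^2/6 := by
      have h1 : (1-p)^k ≤ ((3:ℝ)/4)^k := by
        apply pow_le_pow_left₀ (by rw [h1p]; linarith) (by rw [h1p]; linarith) k
      have h2 : ((3:ℝ)/4)^k ≤ 1728/K^3 := by
        rw [hKdef]
        exact pow34_le (by exact_mod_cast (by nlinarith : (1:ℝ) ≤ (k:ℝ)) )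
      have h3 : 1728/K^3 ≤ s^2/6 := by
        rw [div_le_div_iff₀ (pow_pos hKpos 3) (by norm_num)]
        -- 1728*6 ≤ s^2 * K^3 ; s ≥ 1200/K
        have hs1200 : 1200/K ≤ s := by
          rw [div_le_iff₀ hKpos]; linarith
        have h4 : (1200/K)^2 ≤ s^2 := by
          apply pow_le_pow_left₀ (div_nonneg (by norm_num) hKpos.le) hs1200 2
        have h5 : (1200/K)^2 * K^3 = 1440000*K := by
          field_simp [hKpos.ne']; ring
        have h6 : s^2*K^3 ≥ 1440000*K := by
          calc s^2*K^3 ≥ (1200/K)^2*K^3 := by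
                apply mul_le_mul_of_nonneg_right h4 (pow_nonneg hKpos.le 3)
            _ = 1440000*K := h5
        nlinarith [h6, hKpos]
      linarith [h1, h2, h3]
    have hC : (0:ℝ) ≤ 2^(2000:ℕ)/2^k := by positivity
    linarith [hgap, hpow, hC]

lemma regionBig {k : ℕ} {p : ℝ} (hpa : 1/2 ≤ p) (hp1 : p ≤ 1) :
    binEnt p ≤ 1 - (1-p)^k + 2^(2000:ℕ)/2^k := by
  have h2k : (0:ℝ) < 2^k := by positivity
  have h1 : (1-p)^k ≤ (1/2:ℝ)^k := by
    apply pow_le_pow_left₀ (by linarith) (by linarith) k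
  have h2 : ((1:ℝ)/2)^k = 1/2^k := by rw [div_pow]; norm_num
  have h3 : (1:ℝ)/2^k ≤ 2^(2000:ℕ)/2^k := by
    apply div_le_div_of_nonneg_right ?_ h2k.le
    calc (1:ℝ) ≤ 2^(0:ℕ) := by norm_num
      _ ≤ 2^(2000:ℕ) := pow_le_pow_right₀ one_le_two (by norm_num)
  have h5 : binEnt p ≤ 1 := binEnt_le_one p
  have h6 : (1-p)^k ≤ 2^(2000:ℕ)/2^k := by
    calc (1-p)^k ≤ (1/2:ℝ)^k := h1
      _ = 1/2^k := h2
      _ ≤ 2^(2000:ℕ)/2^k := h3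
  linarith [h6, h5]


/-- **Entropy inequality.** There is an absolute constant `C > 0` such that for every
positive integer `k` and every `p ∈ [0, 1]`:
`H(p) ≤ 1 − (1 − p)^k + C/2^k`. -/
theorem entropy_inequality :
    ∃ C : ℝ, 0 < C ∧
      ∀ (k : ℕ), 0 < k → ∀ p ∈ Set.Icc (0 : ℝ) 1,
        binEnt p ≤ 1 - (1 - p) ^ k + C / 2 ^ k := by
  refine ⟨2^(2000:ℕ), by positivity, ?_⟩
  intro k hk p hp
  obtain ⟨hp0, hp1⟩ := hp
  have h2k : (0:ℝ) < 2^k := by positivity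
  have hpow0 : (0:ℝ) ≤ (1-p)^k := pow_nonneg (by linarith) k
  have hpow1 : (1-p)^k ≤ 1 := pow_le_one₀ (by linarith) (by linarith)
  rcases le_or_gt (k:ℝ) 2000 with hsmall | hbig
  · -- trivial case
    have hkle : k ≤ 2000 := by exact_mod_cast hsmall
    have hC : (1:ℝ) ≤ 2^(2000:ℕ)/2^k := by
      rw [le_div_iff₀ h2k]
      calc (1:ℝ) * 2^k = 2^k := by ring
        _ ≤ 2^(2000:ℕ) := pow_le_pow_right₀ one_le_two hkle
    have := binEnt_le_one p
    linarith
  · have hK : (2000:ℝ) ≤ (k:ℝ) := hbig.le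
    rcases eq_or_lt_of_le hp0 with hp0' | hp0'
    · -- p = 0
      rw [← hp0']
      simp [binEnt]
      positivity
    · rcases le_or_gt p (8/2^k) with h1 | h1
      · exact regionTiny hK hp0' h1
      · rcases le_or_gt p (1/(k:ℝ)^2) with h2 | h2
        · have := regionSmall hK hp0' h1.le h2
          have hC : (0:ℝ) ≤ 2^(2000:ℕ)/2^k := by positivity
          linarith
        · rcases le_or_gt p (40/(k:ℝ)) with h3 | h3
          · have := regionMid hK hp0' h2.le h3
            have hC : (0:ℝ) ≤ 2^(2000:ℕ)/2^k := by positivity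
            linarith
          · rcases le_or_gt p (1/4) with h4 | h4
            · have := regionQuarter hK hp0' h3.le h4
              have hC : (0:ℝ) ≤ 2^(2000:ℕ)/2^k := by positivity
              linarith
            · rcases lt_or_ge p (1/2) with h5 | h5
              · exact regionHalf hK h4.le h5
              · exact regionBig h5 hp1
end

section
/- Let M be an m×n real matrix which is separated, i.e. no entry of M lies in the open interval (0, 1), and suppose 0 ≤ p(M) ≤ 0.9. Then q(M) ≥ p(M)/100. -/
/-- The average entry `p(M)` of an `m × n` real matrix. -/
noncomputable def avgEntry {m n : ℕ} (M : Matrix (Fin m) (Fin n) ℝ) : ℝ :=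
  (∑ i, ∑ j, M i j) / ((m : ℝ) * (n : ℝ))

/-- The variance `q(M)` of the entries of an `m × n` real matrix. -/
noncomputable def varEntry {m n : ℕ} (M : Matrix (Fin m) (Fin n) ℝ) : ℝ :=
  (∑ i, ∑ j, (M i j - avgEntry M) ^ 2) / ((m : ℝ) * (n : ℝ))

/-- **Separated matrices have large variance.** Let `M` be an `m × n` real matrix with
no entry in the open interval `(0, 1)`, and suppose `0 ≤ p(M) ≤ 0.9`. Then
`q(M) ≥ p(M)/100`. -/
theorem separated_large_variance (m n : ℕ) (M : Matrix (Fin m) (Fin n) ℝ)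
    (hsep : ∀ i j, M i j ∉ Set.Ioo (0 : ℝ) 1)
    (h0 : 0 ≤ avgEntry M) (h9 : avgEntry M ≤ 0.9) :
    avgEntry M / 100 ≤ varEntry M := by
  rcases Nat.eq_zero_or_pos m with hm | hm
  · subst hm; simp [avgEntry, varEntry]
  rcases Nat.eq_zero_or_pos n with hn | hn
  · subst hn; simp [avgEntry, varEntry]
  have hN : (0:ℝ) < (m:ℝ) * (n:ℝ) := by positivity
  set p := avgEntry M with hpdef
  set S := ∑ i, ∑ j, M i j with hSdef
  set T := ∑ i, ∑ j, (M i j)^2 with hTdef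
  have hsq : ∀ i j, M i j ≤ (M i j)^2 := by
    intro i j
    have h := hsep i j
    simp only [Set.mem_Ioo, not_and, not_lt] at h
    rcases le_or_gt (M i j) 0 with hx | hx
    · nlinarith
    · have h1 : 1 ≤ M i j := h hx
      nlinarith
  have hT : S ≤ T :=
    Finset.sum_le_sum fun i _ => Finset.sum_le_sum fun j _ => hsq i j
  have hS : S = ((m:ℝ)*(n:ℝ)) * p := by
    rw [hpdef]
    unfold avgEntry
    field_simp
    exact hSdef
  have key : ∑ i, ∑ j, (M i j - p)^2 = T - 2*p*S + ((m:ℝ)*(n:ℝ))*p^2 := by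
    have : ∀ i : Fin m, ∑ j, (M i j - p)^2
        = (∑ j, (M i j)^2) - 2*p*(∑ j, M i j) + (n:ℝ)*p^2 := by
      intro i
      rw [Finset.mul_sum,
        show ((n:ℝ))*p^2 = ∑ _j : Fin n, p^2 by
          simp [Finset.sum_const, Finset.card_univ],
        ← Finset.sum_sub_distrib, ← Finset.sum_add_distrib]
      exact Finset.sum_congr rfl fun j _ => by ring
    rw [Finset.sum_congr rfl fun i _ => this i]
    rw [Finset.sum_add_distrib, Finset.sum_sub_distrib, ← Finset.mul_sum]
    simp [Finset.sum_const, Finset.card_univ, hSdef, hTdef]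
    ring
  have hvar : varEntry M = (T - 2*p*S + ((m:ℝ)*(n:ℝ))*p^2) / ((m:ℝ)*(n:ℝ)) := by
    unfold varEntry
    rw [← hpdef, key]
  rw [hvar, le_div_iff₀ hN]
  rw [hS] at hT ⊢
  nlinarith [mul_nonneg (mul_nonneg hN.le h0) (by linarith : (0:ℝ) ≤ 0.99 - p)]
end

section
/- Let M be an m×n separated real matrix, i.e. no entry of M lies in the open interval (0, 1). Then q(M) ≥ p(M)·(1 − p(M))/100. -/
/-- **Variance bound for separated matrices.** Let `M` be an `m × n` real matrix with no
entry in the open interval `(0, 1)`. Then `q(M) ≥ p(M)·(1 − p(M))/100`. -/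
theorem separated_variance_bound (m n : ℕ) (M : Matrix (Fin m) (Fin n) ℝ)
    (hsep : ∀ i j, M i j ∉ Set.Ioo (0 : ℝ) 1) :
    avgEntry M * (1 - avgEntry M) / 100 ≤ varEntry M := by
  set p := avgEntry M with hp
  by_cases hN : (m : ℝ) * (n : ℝ) = 0
  · have hpz : p = 0 := by rw [hp, avgEntry, hN, div_zero]
    have hq : varEntry M = 0 := by rw [varEntry, hN, div_zero]
    rw [hq, hpz]; norm_num
  · have hNpos : 0 < (m : ℝ) * (n : ℝ) := lt_of_le_of_ne (by positivity) (Ne.symm hN)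
    have hsum : ∑ i, ∑ j, M i j = ((m : ℝ) * (n : ℝ)) * p := by
      rw [hp, avgEntry]; field_simp
      exact (eq_div_iff hN).mpr (by ring)
    -- each entry satisfies x ≤ x²
    have key : ∀ i j, M i j ≤ (M i j) ^ 2 := by
      intro i j
      have h := hsep i j
      simp only [Set.mem_Ioo, not_and, not_lt] at h
      rcases le_or_gt (M i j) 0 with h0 | h0
      · nlinarith
      · have h1 : 1 ≤ M i j := h h0
        nlinarith
    have e2 : ∑ i, ∑ j, M i j ≤ ∑ i, ∑ j, (M i j) ^ 2 := by
      apply Finset.sum_le_sum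
      intro i _
      exact Finset.sum_le_sum fun j _ => key i j
    have e1 : ∑ i, ∑ j, (M i j - p) ^ 2
        = (∑ i, ∑ j, (M i j) ^ 2) - 2 * p * (∑ i, ∑ j, M i j) + ((m : ℝ) * (n : ℝ)) * p ^ 2 := by
      have inner : ∀ i : Fin m, ∑ j, (M i j - p) ^ 2
          = (∑ j, (M i j) ^ 2) - 2 * p * (∑ j, M i j) + (n : ℝ) * p ^ 2 := by
        intro i
        rw [Finset.mul_sum]
        rw [← Finset.sum_sub_distrib]
        have : ((n : ℝ) * p ^ 2) = ∑ _j : Fin n, p ^ 2 := by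
          simp [Finset.sum_const, Finset.card_univ]
        rw [this, ← Finset.sum_add_distrib]
        apply Finset.sum_congr rfl
        intro j _
        ring
      simp_rw [inner]
      rw [Finset.sum_add_distrib, Finset.sum_sub_distrib, Finset.sum_const,
        Finset.card_univ, Fintype.card_fin, ← Finset.mul_sum, nsmul_eq_mul]
      ring
    have hlow : ((m : ℝ) * (n : ℝ)) * (p * (1 - p)) ≤ ∑ i, ∑ j, (M i j - p) ^ 2 := by
      rw [e1, hsum]
      nlinarith [e2, hsum]
    have hvar : varEntry M = (∑ i, ∑ j, (M i j - p) ^ 2) / ((m : ℝ) * (n : ℝ)) := rfl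
    have hv1 : p * (1 - p) ≤ varEntry M := by
      rw [hvar, le_div_iff₀ hNpos]
      linarith [hlow]
    have hv0 : 0 ≤ varEntry M := by
      rw [hvar]
      apply div_nonneg _ hNpos.le
      apply Finset.sum_nonneg
      intro i _
      exact Finset.sum_nonneg fun j _ => sq_nonneg _
    linarith
end

section
/- Let M be an m×n matrix of rank r ≥ 1 all of whose entries are integers, and suppose that M contains no half-sized constant submatrix, i.e. there are no index sets I ⊆ [m], J ⊆ [n] with |I| ≥ m/2 and |J| ≥ n/2 such that all entries M(i,j) with (i,j) ∈ I×J are equal to one another. Then q(M) ≥ 1/(128r). -/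
/-- If a vector lies in the span of a set of vectors all vanishing at `j`,
then it vanishes at `j`. -/
lemma span_apply_eq_zero {n : ℕ} {s : Set (Fin n → ℝ)} {x : Fin n → ℝ}
    (hx : x ∈ Submodule.span ℝ s) (j : Fin n) (h : ∀ v ∈ s, v j = 0) : x j = 0 := by
  have hs : s ⊆ (LinearMap.ker (LinearMap.proj j : (Fin n → ℝ) →ₗ[ℝ] ℝ) : Set (Fin n → ℝ)) := by
    intro v hv
    simpa using h v hv
  exact (Submodule.span_le.2 hs) hx

set_option maxHeartbeats 1000000 in
/-- **Integer matrices without half-sized constant submatrices have large variance.**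
Let `M` be an `m × n` matrix of rank `r ≥ 1` with integer entries. If there are no
`I ⊆ [m]`, `J ⊆ [n]` with `|I| ≥ m/2`, `|J| ≥ n/2` such that all entries of `M[I×J]`
are equal to one another, then `q(M) ≥ 1/(128r)`. -/
theorem no_constant_submatrix_large_variance (m n r : ℕ)
    (M : Matrix (Fin m) (Fin n) ℝ)
    (hint : ∀ i j, ∃ z : ℤ, M i j = (z : ℝ))
    (hrank : M.rank = r) (hr : 1 ≤ r)
    (hno : ¬ ∃ (I : Finset (Fin m)) (J : Finset (Fin n)),
        (m : ℝ) / 2 ≤ (I.card : ℝ) ∧ (n : ℝ) / 2 ≤ (J.card : ℝ) ∧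
        ∀ i ∈ I, ∀ j ∈ J, ∀ i' ∈ I, ∀ j' ∈ J, M i j = M i' j') :
    1 / (128 * (r : ℝ)) ≤ varEntry M := by
  classical
  by_contra hcon
  push_neg at hcon
  -- basic positivity
  have hrm : r ≤ m := by
    have h1 := M.rank_le_card_height
    rw [hrank, Fintype.card_fin] at h1
    exact h1
  have hrn : r ≤ n := by
    have h1 := M.rank_le_card_width
    rw [hrank, Fintype.card_fin] at h1
    exact h1
  have hm : 0 < m := lt_of_lt_of_le hr hrm
  have hn : 0 < n := lt_of_lt_of_le hr hrn
  have hmn : (0 : ℝ) < (m : ℝ) * (n : ℝ) := by positivity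
  have hrR : (1 : ℝ) ≤ (r : ℝ) := by exact_mod_cast hr
  have hnR : (0 : ℝ) < (n : ℝ) := by positivity
  set p : ℝ := avgEntry M with hp
  set q : ℝ := varEntry M with hqdef
  have hq0 : 0 ≤ q := by
    rw [hqdef, varEntry]
    have : (0:ℝ) ≤ ∑ i, ∑ j, (M i j - avgEntry M) ^ 2 :=
      Finset.sum_nonneg fun i _ => Finset.sum_nonneg fun j _ => sq_nonneg _
    positivity
  have hqlt : q < 1 / (128 * (r : ℝ)) := hcon
  have h128 : 128 * (r : ℝ) * q ≤ 1 := by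
    have hpos : (0:ℝ) < 128 * (r:ℝ) := by positivity
    rw [lt_div_iff₀ hpos] at hqlt
    nlinarith
  set z : ℝ := ((round p : ℤ) : ℝ) with hz
  -- entries different from z are far from p
  have hfar : ∀ i j, M i j ≠ z → (1/4 : ℝ) ≤ (M i j - p) ^ 2 := by
    intro i j hne
    obtain ⟨w, hw⟩ := hint i j
    have hwz : w ≠ round p := by
      rintro rfl; exact hne hw
    have h1 : (1 : ℝ) ≤ |M i j - z| := by
      rw [hw, hz]
      have hww : (1 : ℤ) ≤ |w - round p| := Int.one_le_abs (sub_ne_zero.2 hwz)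
      exact_mod_cast hww
    have h2 : |p - z| ≤ 1/2 := by
      rw [hz]; exact abs_sub_round p
    have h3 : |M i j - z| ≤ |M i j - p| + |p - z| := abs_sub_le _ _ _
    have h4 : (1/2 : ℝ) ≤ |M i j - p| := by linarith
    nlinarith [sq_abs (M i j - p), abs_nonneg (M i j - p)]
  -- row deviations
  set s : Fin m → ℝ := fun i => ∑ j, (M i j - p) ^ 2 with hs
  have hs0 : ∀ i, 0 ≤ s i := fun i => Finset.sum_nonneg fun j _ => sq_nonneg _
  have hsum : ∑ i, s i = q * ((m : ℝ) * (n : ℝ)) := by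
    have : q = (∑ i, s i) / ((m : ℝ) * (n : ℝ)) := by
      rw [hqdef, varEntry, hs, ← hp]
    rw [this, div_mul_cancel₀ _ (ne_of_gt hmn)]
  -- the set of good rows
  set I : Finset (Fin m) := Finset.univ.filter (fun i => s i ≤ 2 * q * (n : ℝ)) with hI
  set D : Finset (Fin m) := Finset.univ.filter (fun i => ¬ (s i ≤ 2 * q * (n : ℝ))) with hD
  have hID : I.card + D.card = m := by
    rw [hI, hD, Finset.card_filter_add_card_filter_not, Finset.card_univ,
      Fintype.card_fin]
  have hIcard : (m : ℝ) / 2 ≤ (I.card : ℝ) := by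
    rcases eq_or_lt_of_le hq0 with hq | hq
    · -- q = 0 : all rows are good
      have hzero : ∀ i, s i = 0 := by
        intro i
        have h1 : ∑ i, s i = 0 := by rw [hsum, ← hq]; ring
        have := (Finset.sum_eq_zero_iff_of_nonneg (fun i _ => hs0 i)).1 h1
        exact this i (Finset.mem_univ i)
      have : D = ∅ := by
        rw [hD]
        apply Finset.filter_false_of_mem
        intro i _
        rw [hzero i]
        intro hcontra
        apply hcontra
        nlinarith
      rw [this, Finset.card_empty] at hID
      have : I.card = m := by omega
      rw [this]
      linarith
    · -- q > 0 : Markov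
      have hmark : (D.card : ℝ) * (2 * q * (n : ℝ)) ≤ q * ((m : ℝ) * (n : ℝ)) := by
        calc (D.card : ℝ) * (2 * q * (n : ℝ)) = ∑ _i ∈ D, 2 * q * (n : ℝ) := by
              rw [Finset.sum_const, nsmul_eq_mul]
          _ ≤ ∑ i ∈ D, s i := by
              apply Finset.sum_le_sum
              intro i hi
              rw [hD, Finset.mem_filter] at hi
              linarith [hi.2, not_le.1 hi.2]
          _ ≤ ∑ i, s i := Finset.sum_le_sum_of_subset_of_nonneg (Finset.subset_univ D)
              (fun i _ _ => hs0 i)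
          _ = q * ((m : ℝ) * (n : ℝ)) := hsum
      have hDle : (D.card : ℝ) ≤ (m : ℝ) / 2 := by
        have h2qn : (0:ℝ) < 2 * q * (n : ℝ) := by positivity
        rw [← le_div_iff₀ h2qn] at hmark
        calc (D.card : ℝ) ≤ q * ((m : ℝ) * (n : ℝ)) / (2 * q * (n : ℝ)) := hmark
          _ = (m : ℝ) / 2 := by field_simp
      have : (I.card : ℝ) + (D.card : ℝ) = (m : ℝ) := by exact_mod_cast hID
      linarith
  -- bad entries per row
  set B : Fin m → Finset (Fin n) := fun i => Finset.univ.filter (fun j => M i j ≠ z) with hB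
  have hBcard : ∀ i ∈ I, ((B i).card : ℝ) ≤ 8 * q * (n : ℝ) := by
    intro i hi
    rw [hI, Finset.mem_filter] at hi
    have h1 : ((B i).card : ℝ) * (1/4) ≤ s i := by
      calc ((B i).card : ℝ) * (1/4) = ∑ _j ∈ B i, (1/4 : ℝ) := by
            rw [Finset.sum_const, nsmul_eq_mul]
        _ ≤ ∑ j ∈ B i, (M i j - p) ^ 2 := by
            apply Finset.sum_le_sum
            intro j hj
            rw [hB, Finset.mem_filter] at hj
            exact hfar i j hj.2
        _ ≤ ∑ j, (M i j - p) ^ 2 := Finset.sum_le_sum_of_subset_of_nonneg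
            (Finset.subset_univ _) (fun j _ _ => sq_nonneg _)
        _ = s i := rfl
    linarith [hi.2]
  -- the span of shifted rows has dimension ≤ r + 1
  set c : Fin n → ℝ := fun _ => z with hc
  set v : Fin m → (Fin n → ℝ) := fun i => (M i) - c with hv
  set W : Submodule ℝ (Fin n → ℝ) := Submodule.span ℝ (Set.range M ∪ {c}) with hW
  have hfinW : Module.finrank ℝ W ≤ r + 1 := by
    rw [hW, Submodule.span_union]
    refine le_trans (Submodule.finrank_add_le_finrank_add_finrank _ _) ?_
    have h1 : Module.finrank ℝ (Submodule.span ℝ (Set.range M)) = r := by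
      exact (M.rank_eq_finrank_span_row).symm.trans hrank
    have h2 : Module.finrank ℝ (Submodule.span ℝ ({c} : Set (Fin n → ℝ))) ≤ 1 := by
      have := finrank_span_le_card (R := ℝ) ({c} : Set (Fin n → ℝ))
      simpa using this
    omega
  have hvW : ∀ i, v i ∈ W := by
    intro i
    rw [hv]
    exact sub_mem (Submodule.subset_span (Or.inl ⟨i, rfl⟩))
      (Submodule.subset_span (Or.inr rfl))
  -- extract a small spanning subset
  set S : Set (Fin n → ℝ) := v '' (I : Set (Fin m)) with hS
  obtain ⟨b, hbS, hbspan, hbind⟩ := exists_linearIndependent ℝ S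
  have hbfin : b.Finite := hbind.setFinite
  haveI : Fintype b := hbfin.fintype
  have hspanW : Submodule.span ℝ b ≤ W := by
    rw [Submodule.span_le]
    intro x hx
    obtain ⟨i, _, rfl⟩ := hbS hx
    exact hvW i
  have hbcard : b.toFinset.card ≤ r + 1 := by
    rw [← finrank_span_set_eq_card hbind]
    exact le_trans (Submodule.finrank_mono hspanW) hfinW
  -- choose indices for basis vectors
  have hmne : Nonempty (Fin m) := ⟨⟨0, hm⟩⟩
  set f : (Fin n → ℝ) → Fin m := fun x =>
    if h : ∃ i, i ∈ I ∧ v i = x then h.choose else Classical.arbitrary (Fin m) with hf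
  have hfspec : ∀ x ∈ b, f x ∈ I ∧ v (f x) = x := by
    intro x hx
    obtain ⟨i, hiI, hvi⟩ := hbS hx
    have hex : ∃ i, i ∈ I ∧ v i = x := ⟨i, Finset.mem_coe.1 hiI, hvi⟩
    rw [hf]
    simp only [dif_pos hex]
    exact hex.choose_spec
  set F : Finset (Fin m) := b.toFinset.image f with hF
  have hFcard : F.card ≤ r + 1 := le_trans (Finset.card_image_le) hbcard
  have hFI : ∀ i ∈ F, i ∈ I := by
    intro i hi
    rw [hF, Finset.mem_image] at hi
    obtain ⟨x, hx, rfl⟩ := hi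
    exact (hfspec x (Set.mem_toFinset.1 hx)).1
  -- the bad column set
  set T : Finset (Fin n) := F.biUnion B with hT
  have hTcard : (T.card : ℝ) ≤ ((r : ℝ) + 1) * (8 * q * (n : ℝ)) := by
    have h1 : T.card ≤ ∑ i ∈ F, (B i).card := Finset.card_biUnion_le
    have h2 : ((∑ i ∈ F, (B i).card : ℕ) : ℝ) ≤ ∑ i ∈ F, (8 * q * (n : ℝ)) := by
      push_cast
      exact Finset.sum_le_sum fun i hi => hBcard i (hFI i hi)
    have h3 : ∑ i ∈ F, (8 * q * (n : ℝ)) = (F.card : ℝ) * (8 * q * (n : ℝ)) := by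
      rw [Finset.sum_const, nsmul_eq_mul]
    have h4 : (F.card : ℝ) ≤ (r : ℝ) + 1 := by exact_mod_cast hFcard
    have h5 : (0:ℝ) ≤ 8 * q * (n : ℝ) := by positivity
    calc (T.card : ℝ) ≤ ((∑ i ∈ F, (B i).card : ℕ) : ℝ) := by exact_mod_cast h1
      _ ≤ (F.card : ℝ) * (8 * q * (n : ℝ)) := by rw [← h3]; exact h2
      _ ≤ ((r : ℝ) + 1) * (8 * q * (n : ℝ)) := mul_le_mul_of_nonneg_right h4 h5
  set J : Finset (Fin n) := Tᶜ with hJ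
  have hJcard : (n : ℝ) / 2 ≤ (J.card : ℝ) := by
    have h1 : J.card = n - T.card := by
      rw [hJ, Finset.card_compl, Fintype.card_fin]
    have h2 : T.card ≤ n := le_trans (Finset.card_le_univ T) (by simp)
    have h3 : (J.card : ℝ) = (n : ℝ) - (T.card : ℝ) := by
      rw [h1]; push_cast [h2]; ring
    -- (r+1) * 8 q n ≤ n/8
    have h4 : ((r : ℝ) + 1) * (8 * q * (n : ℝ)) ≤ (n : ℝ) / 8 := by
      have e3 : 128 * (r:ℝ) * q * (n:ℝ) ≤ (n:ℝ) := by
        have := mul_le_mul_of_nonneg_right h128 hnR.le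
        linarith
      have e1 : ((r:ℝ) + 1) * (8 * q * (n:ℝ)) ≤ 2 * (r:ℝ) * (8 * q * (n:ℝ)) :=
        mul_le_mul_of_nonneg_right (by linarith) (by positivity)
      calc ((r:ℝ) + 1) * (8 * q * (n:ℝ)) ≤ 2 * (r:ℝ) * (8 * q * (n:ℝ)) := e1
        _ = (128 * (r:ℝ) * q * (n:ℝ)) / 8 := by ring
        _ ≤ (n:ℝ) / 8 := by linarith
    linarith
  -- all entries on I × J equal z
  have hzero : ∀ i ∈ I, ∀ j ∈ J, M i j = z := by
    intro i hi j hj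
    have hvi : v i ∈ Submodule.span ℝ b := by
      rw [hbspan]
      exact Submodule.subset_span ⟨i, Finset.mem_coe.2 hi, rfl⟩
    have hvanish : ∀ x ∈ b, x j = 0 := by
      intro x hx
      obtain ⟨hfI, hfv⟩ := hfspec x hx
      have hjT : j ∉ T := by
        rw [hJ, Finset.mem_compl] at hj
        exact hj
      have hjB : j ∉ B (f x) := by
        intro hcontra
        exact hjT (Finset.mem_biUnion.2 ⟨f x, Finset.mem_image.2
          ⟨x, Set.mem_toFinset.2 hx, rfl⟩, hcontra⟩)
      have : M (f x) j = z := by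
        by_contra hne
        exact hjB (Finset.mem_filter.2 ⟨Finset.mem_univ j, hne⟩)
      have hvfx : v (f x) j = M (f x) j - z := by rw [hv, hc]; rfl
      rw [← hfv, hvfx, this, sub_self]
    have h0 : v i j = 0 := span_apply_eq_zero hvi j hvanish
    have hvij : v i j = M i j - z := by rw [hv, hc]; rfl
    rw [hvij] at h0
    exact sub_eq_zero.1 h0
  exact hno ⟨I, J, hIcard, hJcard, fun i hi j hj i' hi' j' hj' => by
    rw [hzero i hi j hj, hzero i' hi' j' hj']⟩
end
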